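/- arXiv:2407.19885 — 10 statements merged into one kernel-verified Lean document; each statement's English description precedes it below -/
import Mathlib

section
/- For every positive integer n, E_{2n-1} = 4(2n-1)! · (-1)^n/π^{2n} · ∑_{k≥0} 1/(2k+1)^{2n}. -/
open Real

/-- The Euler numbers, defined by the generating function 2/(e^z+1) = ∑ E_n z^n/n!,
equivalently by E_0 = 1 and E_n = -∑_{i=0}^n C(n,i) E_i for n ≥ 1. -/
noncomputable def eulerNumber (n : ℕ) : ℚ :=
  Nat.strongRecOn n fun n ih =>
    if n = 0 then 1
    else -(1/2) * ∑ i : Fin n, (n.choose i : ℚ) * ih i i.isLt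

section Aux

open PowerSeries Nat Finset

theorem eulerNumber_def (n : ℕ) :
    eulerNumber n = if n = 0 then 1
      else -(1/2) * ∑ i ∈ Finset.range n, (n.choose i : ℚ) * eulerNumber i := by
  rw [eulerNumber, Nat.strongRecOn_eq]
  have h : ∀ m : ℕ, (Nat.strongRecOn m fun n ih =>
      if n = 0 then 1
      else -(1/2) * ∑ i : Fin n, (n.choose i : ℚ) * ih i i.isLt) = eulerNumber m :=
    fun m => rfl
  simp only [h]
  rw [← Fin.sum_univ_eq_sum_range (fun i => ((n.choose i : ℚ) * eulerNumber i))]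

theorem eulerNumber_zero : eulerNumber 0 = 1 := by rw [eulerNumber_def]; simp

theorem eulerNumber_rec (n : ℕ) (hn : n ≠ 0) :
    ∑ i ∈ Finset.range (n+1), (n.choose i : ℚ) * eulerNumber i = - eulerNumber n := by
  rw [Finset.sum_range_succ, Nat.choose_self]
  nth_rewrite 1 [eulerNumber_def]
  rw [if_neg hn]
  conv_rhs => rw [eulerNumber_def, if_neg hn]
  ring

noncomputable def eulerSeries : PowerSeries ℚ := PowerSeries.mk fun n => eulerNumber n / n !

theorem eulerSeries_mul : eulerSeries * (exp ℚ + 1) = 2 := by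
  ext n
  cases n with
  | zero =>
      simp only [coeff_zero_eq_constantCoeff, map_mul, map_add, map_one, constantCoeff_exp,
        map_ofNat]
      simp [eulerSeries, eulerNumber_zero]
      norm_num
  | succ k =>
    have h2 : (coeff (k+1)) (2 : ℚ⟦X⟧) = 0 := by
      have h : (2 : ℚ⟦X⟧) = C 2 := (map_ofNat C 2).symm
      simp [h]
    rw [h2, coeff_mul, Finset.Nat.sum_antidiagonal_eq_sum_range_succ_mk]
    have hsplit : ∀ i ∈ Finset.range (k+1+1),
        (coeff i) eulerSeries * (coeff (k+1-i)) (exp ℚ + 1) =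
        eulerNumber i / i ! * (1 / (k+1-i)! + if k+1-i = 0 then 1 else 0) := by
      intro i hi
      simp [eulerSeries, coeff_exp, coeff_one, PowerSeries.coeff_mk, one_div,
        Algebra.algebraMap_self, map_inv₀, RingHom.id_apply]
    rw [Finset.sum_congr rfl hsplit, Finset.sum_range_succ]
    have hlast : eulerNumber (k+1) / (k+1)! * (1 / (k+1-(k+1))! + if k+1-(k+1) = 0 then 1 else 0)
        = 2 * eulerNumber (k+1) / (k+1)! := by
      simp; ring
    rw [hlast]
    have hrest : ∀ i ∈ Finset.range (k+1),
        eulerNumber i / i ! * (1 / (k+1-i)! + if k+1-i = 0 then 1 else 0) =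
        ((k+1).choose i : ℚ) * eulerNumber i / (k+1)! := by
      intro i hi
      rw [Finset.mem_range] at hi
      rw [if_neg (by omega)]
      have hle : i ≤ k + 1 := by omega
      rw [Nat.choose_eq_factorial_div_factorial hle,
        Nat.cast_div_charZero (Nat.factorial_mul_factorial_dvd_factorial hle)]
      have h1 : (i ! : ℚ) ≠ 0 := by exact_mod_cast Nat.factorial_ne_zero i
      have h2 : ((k+1-i)! : ℚ) ≠ 0 := by exact_mod_cast Nat.factorial_ne_zero _
      have h3 : ((k+1)! : ℚ) ≠ 0 := by exact_mod_cast Nat.factorial_ne_zero _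
      push_cast
      field_simp
      ring
    rw [Finset.sum_congr rfl hrest, ← Finset.sum_div]
    have := eulerNumber_rec (k+1) (Nat.succ_ne_zero k)
    rw [Finset.sum_range_succ, Nat.choose_self] at this
    have hsum : ∑ i ∈ Finset.range (k+1), ((k+1).choose i : ℚ) * eulerNumber i
        = -2 * eulerNumber (k+1) := by push_cast at this; linarith
    rw [hsum]; ring

theorem key : (X : ℚ⟦X⟧) * eulerSeries
    = 2 * bernoulliPowerSeries ℚ - 2 * rescale 2 (bernoulliPowerSeries ℚ) := by
  have hc : (rescale (2:ℚ) (exp ℚ) - 1) ≠ 0 := by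
    intro h
    have h1 := congrArg (coeff 1) h
    simp [coeff_rescale, coeff_exp, coeff_one] at h1
  apply mul_right_cancel₀ hc
  have hsq : (exp ℚ + 1) * (exp ℚ - 1) = rescale (2:ℚ) (exp ℚ) - 1 := by
    have h2 : exp ℚ * exp ℚ = rescale (2:ℚ) (exp ℚ) := by
      have := exp_pow_eq_rescale_exp (A := ℚ) 2
      rw [pow_two] at this
      simpa using this
    rw [← h2]; ring
  have hB := bernoulliPowerSeries_mul_exp_sub_one ℚ
  have hB2 : rescale (2:ℚ) (bernoulliPowerSeries ℚ) * (rescale (2:ℚ) (exp ℚ) - 1)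
      = 2 * X := by
    have h := congrArg (rescale (2:ℚ)) hB
    rw [map_mul, map_sub, map_one, rescale_X] at h
    rw [h, show (C 2 : ℚ⟦X⟧) = (2:ℚ⟦X⟧) from map_ofNat _ 2]
  calc (X : ℚ⟦X⟧) * eulerSeries * (rescale (2:ℚ) (exp ℚ) - 1)
      = X * (eulerSeries * (exp ℚ + 1)) * (exp ℚ - 1) := by rw [← hsq]; ring
    _ = 2 * X * (exp ℚ - 1) := by rw [eulerSeries_mul]; ring
    _ = 2 * X * (exp ℚ + 1) - 2 * (2 * X) := by ring
    _ = 2 * (bernoulliPowerSeries ℚ * (exp ℚ - 1)) * (exp ℚ + 1)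
        - 2 * (rescale (2:ℚ) (bernoulliPowerSeries ℚ) * (rescale (2:ℚ) (exp ℚ) - 1)) := by
        rw [hB, hB2]
    _ = (2 * bernoulliPowerSeries ℚ - 2 * rescale 2 (bernoulliPowerSeries ℚ)) *
          (rescale (2:ℚ) (exp ℚ) - 1) := by rw [← hsq]; ring

theorem eulerNumber_eq_bernoulli (m : ℕ) :
    eulerNumber m = 2 * (1 - 2^(m+1)) * bernoulli (m+1) / (m+1) := by
  have h := congrArg (coeff (m+1)) key
  rw [coeff_succ_X_mul, map_sub,
    show (2:ℚ⟦X⟧) = C 2 from (map_ofNat _ 2).symm] at h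
  simp only [coeff_C_mul, coeff_rescale, bernoulliPowerSeries, coeff_mk, eulerSeries,
    Algebra.algebraMap_self, RingHom.id_apply] at h
  have hf : ((m)! : ℚ) ≠ 0 := by exact_mod_cast Nat.factorial_ne_zero m
  have hf1 : ((m+1)! : ℚ) ≠ 0 := by exact_mod_cast Nat.factorial_ne_zero (m+1)
  have hm1 : ((m:ℚ)+1) ≠ 0 := by positivity
  have hfs : ((m+1)! : ℚ) = ((m:ℚ)+1) * (m)! := by
    rw [Nat.factorial_succ]; push_cast; ring
  rw [hfs] at h
  field_simp at h ⊢
  have h2 : eulerNumber m * ((m:ℚ)+1) =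
      2 * bernoulli (m + 1) - 2 * (2 ^ (m + 1) * bernoulli (m + 1)) :=
    mul_right_cancel₀ hf (by rw [h]; ring)
  linear_combination h2

open Real in
theorem oddSum (n : ℕ) (hn : n ≠ 0) :
    HasSum (fun k : ℕ => 1 / (2 * (k : ℝ) + 1) ^ (2 * n))
      ((1 - 1 / 2 ^ (2 * n)) *
        ((-1 : ℝ) ^ (n + 1) * (2 : ℝ) ^ (2 * n - 1) * π ^ (2 * n) *
          bernoulli (2 * n) / (2 * n)!)) := by
  set Z : ℝ := (-1 : ℝ) ^ (n + 1) * (2 : ℝ) ^ (2 * n - 1) * π ^ (2 * n) *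
      bernoulli (2 * n) / (2 * n)! with hZ
  have h1 : HasSum (fun m : ℕ => 1 / (m : ℝ) ^ (2 * n)) Z := hasSum_zeta_nat hn
  have h2 : HasSum (fun k : ℕ => 1 / ((2 * k : ℕ) : ℝ) ^ (2 * n)) (Z / 2 ^ (2 * n)) := by
    have := h1.div_const ((2:ℝ) ^ (2 * n))
    refine this.congr_fun fun k => ?_
    push_cast
    rw [mul_pow]
    rw [div_div]
    ring_nf
  have hodd : Summable (fun k : ℕ => 1 / ((2 * k + 1 : ℕ) : ℝ) ^ (2 * n)) :=
    h1.summable.comp_injective (fun a b h => by omega)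
  obtain ⟨T, hT⟩ := hodd
  have htot : HasSum (fun m : ℕ => 1 / (m : ℝ) ^ (2 * n)) (Z / 2 ^ (2 * n) + T) :=
    HasSum.even_add_odd h2 hT
  have hTeq : T = Z - Z / 2 ^ (2 * n) := by
    have := h1.unique htot
    linarith
  have : (1 - 1 / 2 ^ (2 * n)) * Z = T := by
    rw [hTeq]; ring
  rw [← this] at hT
  refine hT.congr_fun fun k => ?_
  push_cast
  ring_nf

end Aux

open Real in
theorem stmt_2 (n : ℕ) (hn : 0 < n) :
    (eulerNumber (2 * n - 1) : ℝ) =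
      4 * (Nat.factorial (2 * n - 1)) * ((-1) ^ n / π ^ (2 * n)) *
        ∑' k : ℕ, 1 / (2 * (k : ℝ) + 1) ^ (2 * n) := by
  rw [(oddSum n hn.ne').tsum_eq]
  have hm : 2 * n - 1 + 1 = 2 * n := by omega
  have h0 := eulerNumber_eq_bernoulli (2 * n - 1)
  rw [hm] at h0
  rw [h0]
  have hd : ((2 * n - 1 : ℕ) : ℝ) + 1 = 2 * n := by
    rw [Nat.cast_sub (by omega)]; push_cast; ring
  push_cast
  rw [hd]
  have hfac : ((Nat.factorial (2 * n)) : ℝ) = (2 * n) * ((Nat.factorial (2 * n - 1)) : ℝ) := by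
    rw [← Nat.mul_factorial_pred (by omega : 2 * n ≠ 0)]; push_cast; ring
  have hp : (2:ℝ) ^ (2 * n) = 2 * 2 ^ (2 * n - 1) := by
    conv_lhs => rw [← hm]
    rw [pow_succ]; ring
  have hs : ((-1:ℝ)) ^ (n + 1) = -(-1) ^ n := by rw [pow_succ]; ring
  have hsq : ((-1:ℝ)) ^ n * (-1) ^ n = 1 := by
    rw [← pow_add, ← two_mul, pow_mul]; norm_num
  rw [hfac, hp, hs]
  have hπ : (π : ℝ) ^ (2 * n) ≠ 0 := pow_ne_zero _ pi_ne_zero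
  have hf1 : ((Nat.factorial (2 * n - 1)) : ℝ) ≠ 0 := by exact_mod_cast Nat.factorial_ne_zero _
  have hn' : (n : ℝ) ≠ 0 := Nat.cast_ne_zero.mpr hn.ne'
  have h2p : (2:ℝ) ^ (2 * n - 1) ≠ 0 := by positivity
  field_simp
  linear_combination (4 * (bernoulli (2*n) : ℝ) * (2 * 2^(2*n-1) - 1)) * hsq
end

section
/- For all real x with |x| < π/2, tan x = ∑_{k≥0} (2/(π(2k+1)))^2 · 2x / (1 - (2x/(π(2k+1)))^2). -/
open Real Filter Finset

private lemma tan_aux_summable (C : ℝ) : Summable (fun n : ℕ => C / ((n:ℝ)+1)^2) := by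
  have h0 : Summable (fun n : ℕ => 1 / ((n:ℝ))^2) :=
    summable_one_div_nat_pow.mpr one_lt_two
  have h : Summable (fun n : ℕ => 1 / ((n:ℝ)+1)^2) := by
    have := (summable_nat_add_iff (f := fun n : ℕ => 1 / (n:ℝ)^2) 1).mpr h0
    simpa [Nat.cast_add] using this
  have := h.mul_left C
  simpa [div_eq_mul_inv] using this

private lemma tan_aux_denom {x : ℝ} (n : ℕ) :
    ((n:ℝ)+1)^2 * (π^2 - x^2) ≤ ((n:ℝ)+1)^2 * π^2 - x^2 := by
  have hn : (0:ℝ) ≤ (n:ℝ) := Nat.cast_nonneg n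
  nlinarith [mul_nonneg hn (sq_nonneg x), mul_nonneg (mul_nonneg hn hn) (sq_nonneg x)]

private lemma tan_aux_sq_lt {x : ℝ} (hx : |x| < π) : x^2 < π^2 := by
  have := abs_nonneg x
  nlinarith [sq_abs x]

private lemma tan_aux_denom_pos {x : ℝ} (hx : |x| < π) (n : ℕ) :
    0 < ((n:ℝ)+1)^2 * π^2 - x^2 := by
  have h1 : x^2 < π^2 := tan_aux_sq_lt hx
  have hn : (0:ℝ) ≤ (n:ℝ) := Nat.cast_nonneg n
  have h2 : 0 < ((n:ℝ)+1)^2 * (π^2 - x^2) := mul_pos (by positivity) (by linarith)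
  exact lt_of_lt_of_le h2 (tan_aux_denom n)

private lemma tan_aux_summable_G {x : ℝ} (hx : |x| < π) :
    Summable (fun n : ℕ => -(2*x) / (((n:ℝ)+1)^2 * π^2 - x^2)) := by
  have hpx : x^2 < π^2 := tan_aux_sq_lt hx
  apply Summable.of_norm_bounded (g := fun n : ℕ => (2*|x|/(π^2-x^2)) / ((n:ℝ)+1)^2)
    (tan_aux_summable _)
  intro n
  have hD := tan_aux_denom_pos hx n
  have hE : (0:ℝ) < ((n:ℝ)+1)^2 * (π^2 - x^2) := mul_pos (by positivity) (by linarith)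
  rw [Real.norm_eq_abs, abs_div, abs_neg, abs_mul, abs_two, abs_of_pos hD]
  have hrhs : (2*|x|/(π^2-x^2)) / ((n:ℝ)+1)^2 = 2*|x| / (((n:ℝ)+1)^2 * (π^2 - x^2)) := by
    rw [div_div]; ring_nf
  rw [hrhs]
  exact div_le_div_of_nonneg_left (by positivity) hE (tan_aux_denom n)

private lemma tan_aux_factor_pos {x : ℝ} (hx : |x| < π) (n : ℕ) :
    0 < 1 - x^2 / (((n:ℝ)+1)^2 * π^2) := by
  have hd : (0:ℝ) < ((n:ℝ)+1)^2 * π^2 := by positivity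
  have := tan_aux_denom_pos hx n
  rw [sub_pos, div_lt_one hd]
  linarith

private lemma tan_aux_summable_log {x : ℝ} (hx : |x| < π) :
    Summable (fun n : ℕ => Real.log (1 - x^2 / (((n:ℝ)+1)^2 * π^2))) := by
  have hpi : (0:ℝ) < π := pi_pos
  have hx2 : x^2 < π^2 := tan_aux_sq_lt hx
  have ht0 : x^2/π^2 < 1 := (div_lt_one (by positivity)).mpr hx2
  apply Summable.of_norm_bounded
    (g := fun n : ℕ => (x^2/(π^2 * (1 - x^2/π^2))) / ((n:ℝ)+1)^2) (tan_aux_summable _)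
  intro n
  set d : ℝ := ((n:ℝ)+1)^2 * π^2 with hd
  have hdpos : (0:ℝ) < d := by positivity
  set t : ℝ := x^2 / d with htdef
  have ht_nonneg : 0 ≤ t := by positivity
  have htle : t ≤ x^2/π^2 := by
    have hπ2 : (0:ℝ) < π^2 := by positivity
    have hπd : π^2 ≤ d := by
      rw [hd]
      nlinarith [mul_nonneg (Nat.cast_nonneg n : (0:ℝ) ≤ n) (sq_nonneg π),
        mul_nonneg (mul_nonneg (Nat.cast_nonneg n : (0:ℝ) ≤ n) (Nat.cast_nonneg n : (0:ℝ) ≤ n)) (sq_nonneg π)]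
    exact div_le_div_of_nonneg_left (sq_nonneg x) hπ2 hπd
  have ht1 : t < 1 := lt_of_le_of_lt htle ht0
  have hlog_le : -Real.log (1 - t) ≤ t / (1 - t) := by
    have h1t : (0:ℝ) < 1 - t := by linarith
    have := Real.log_le_sub_one_of_pos (x := (1-t)⁻¹) (by positivity)
    rw [Real.log_inv] at this
    have h2 : (1-t)⁻¹ - 1 = t / (1-t) := by field_simp; ring
    linarith
  have hlog_nonpos : Real.log (1 - t) ≤ 0 :=
    Real.log_nonpos (by linarith) (by linarith)
  rw [Real.norm_eq_abs, abs_of_nonpos hlog_nonpos]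
  have hb : t / (1 - t) ≤ t / (1 - x^2/π^2) := by
    apply div_le_div_of_nonneg_left ht_nonneg (by linarith) (by linarith)
  have heq : (x^2/(π^2 * (1 - x^2/π^2))) / ((n:ℝ)+1)^2 = t / (1 - x^2/π^2) := by
    have h1 : π^2 - x^2 ≠ 0 := by nlinarith
    have h2 : ((n:ℝ)+1) ≠ 0 := by positivity
    have h3 : (π:ℝ) ≠ 0 := pi_pos.ne'
    rw [htdef, hd]
    field_simp
  rw [heq]
  exact le_trans hlog_le hb

private lemma tan_aux_hasDerivAt_log (n : ℕ) {y : ℝ} (hy : |y| < π) :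
    HasDerivAt (fun z : ℝ => Real.log (1 - z^2 / (((n:ℝ)+1)^2 * π^2)))
      (-(2*y) / (((n:ℝ)+1)^2 * π^2 - y^2)) y := by
  set d : ℝ := ((n:ℝ)+1)^2 * π^2 with hd
  have hdpos : (0:ℝ) < d := by positivity
  have hfpos := tan_aux_factor_pos hy n
  have h1 : HasDerivAt (fun z : ℝ => 1 - z^2 / d) (-(2*y)/d) y := by
    have := ((hasDerivAt_pow 2 y).div_const d).const_sub 1
    simpa [pow_one, neg_div] using this
  have h2 := h1.log (ne_of_gt hfpos)
  have heq : (-(2*y)/d) / (1 - y^2/d) = -(2*y) / (d - y^2) := by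
    have hdy : d - y^2 ≠ 0 := (tan_aux_denom_pos hy n).ne'
    field_simp
  exact heq ▸ h2

private lemma tan_aux_hasDerivAt_F {x : ℝ} (hx : |x| < π) :
    HasDerivAt (fun z : ℝ => ∑' n : ℕ, Real.log (1 - z^2 / (((n:ℝ)+1)^2 * π^2)))
      (∑' n : ℕ, -(2*x) / (((n:ℝ)+1)^2 * π^2 - x^2)) x := by
  set r : ℝ := (|x| + π) / 2 with hr
  have hpi : (0:ℝ) < π := pi_pos
  have hxr : |x| < r := by rw [hr]; linarith
  have hrπ : r < π := by rw [hr]; linarith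
  have hr0 : 0 < r := by rw [hr]; positivity
  apply hasDerivAt_tsum_of_isPreconnected
    (u := fun n : ℕ => (2*r/(π^2 - r^2)) / ((n:ℝ)+1)^2)
    (tan_aux_summable _) (isOpen_Ioo (a := -r) (b := r))
    ((convex_Ioo _ _).isPreconnected)
    (fun n y hy => tan_aux_hasDerivAt_log n (lt_trans (abs_lt.mpr ⟨hy.1, hy.2⟩) hrπ))
    ?_ (y₀ := 0) (Set.mem_Ioo.mpr ⟨by linarith, hr0⟩)
    (by simpa using (summable_zero : Summable (fun _ : ℕ => (0:ℝ)))) ?_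
  · intro n y hy
    have hyr : |y| < r := abs_lt.mpr ⟨hy.1, hy.2⟩
    have hyπ : |y| < π := lt_trans hyr hrπ
    have hD := tan_aux_denom_pos hyπ n
    have hE : (0:ℝ) < ((n:ℝ)+1)^2 * (π^2 - r^2) :=
      mul_pos (by positivity) (by nlinarith [abs_nonneg x])
    rw [Real.norm_eq_abs, abs_div, abs_neg, abs_mul, abs_two, abs_of_pos hD]
    have h1 : 2 * |y| / (((n:ℝ)+1)^2 * π^2 - y^2) ≤ 2 * r / (((n:ℝ)+1)^2 * (π^2 - r^2)) := by
      apply div_le_div₀ (by positivity) (by linarith) hE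
      calc ((n:ℝ)+1)^2 * (π^2 - r^2) ≤ ((n:ℝ)+1)^2 * (π^2 - y^2) := by
            apply mul_le_mul_of_nonneg_left _ (by positivity)
            nlinarith [sq_abs y, abs_nonneg y, hyr]
        _ ≤ ((n:ℝ)+1)^2 * π^2 - y^2 := tan_aux_denom n
    have h2 : (2*r/(π^2 - r^2)) / ((n:ℝ)+1)^2 = 2*r / (((n:ℝ)+1)^2 * (π^2 - r^2)) := by
      rw [div_div]; ring_nf
    exact le_trans h1 (le_of_eq h2.symm)
  · exact Set.mem_Ioo.mpr (abs_lt.mp hxr)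

private lemma tan_aux_sin_div_pos {x : ℝ} (hx0 : x ≠ 0) (hx : |x| < π) :
    0 < Real.sin x / x := by
  rcases lt_or_gt_of_ne hx0 with h | h
  · have h1 : 0 < -x := by linarith
    have h2 : -x < π := by have := (abs_lt.mp hx).1; linarith
    have : 0 < Real.sin (-x) := Real.sin_pos_of_pos_of_lt_pi h1 h2
    rw [Real.sin_neg] at this
    exact div_pos_of_neg_of_neg (by linarith) h
  · have h2 : x < π := (abs_lt.mp hx).2
    exact div_pos (Real.sin_pos_of_pos_of_lt_pi h h2) h

private lemma tan_aux_F_eq {x : ℝ} (hx0 : x ≠ 0) (hx : |x| < π) :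
    (∑' n : ℕ, Real.log (1 - x^2 / (((n:ℝ)+1)^2 * π^2))) = Real.log (Real.sin x / x) := by
  have hpi : (0:ℝ) < π := pi_pos
  have h0 := Real.tendsto_euler_sin_prod (x / π)
  have hfun : ∀ n : ℕ, π * (x/π) * ∏ j ∈ Finset.range n, ((1:ℝ) - (x/π)^2 / ((j:ℝ)+1)^2)
      = x * ∏ j ∈ Finset.range n, ((1:ℝ) - x^2 / (((j:ℝ)+1)^2 * π^2)) := by
    intro n
    rw [mul_div_cancel₀ _ hpi.ne']
    congr 1
    apply Finset.prod_congr rfl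
    intro j _
    rw [div_pow]
    rw [div_div]
    ring_nf
  have hsin : Real.sin (π * (x/π)) = Real.sin x := by
    rw [mul_div_cancel₀ _ hpi.ne']
  rw [hsin] at h0
  have h1 : Tendsto (fun n : ℕ => x * ∏ j ∈ Finset.range n,
      ((1:ℝ) - x^2 / (((j:ℝ)+1)^2 * π^2))) atTop (nhds (Real.sin x)) := by
    refine h0.congr (fun n => hfun n)
  have h2 : Tendsto (fun n : ℕ => ∏ j ∈ Finset.range n,
      ((1:ℝ) - x^2 / (((j:ℝ)+1)^2 * π^2))) atTop (nhds (Real.sin x / x)) := by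
    have := h1.div_const x
    refine this.congr (fun n => ?_)
    rw [mul_comm, mul_div_assoc, div_self hx0, mul_one]
  have hne : Real.sin x / x ≠ 0 := (tan_aux_sin_div_pos hx0 hx).ne'
  have h3 : Tendsto (fun n : ℕ => Real.log (∏ j ∈ Finset.range n,
      ((1:ℝ) - x^2 / (((j:ℝ)+1)^2 * π^2)))) atTop (nhds (Real.log (Real.sin x / x))) :=
    (Real.continuousAt_log hne).tendsto.comp h2
  have h4 : ∀ n : ℕ, Real.log (∏ j ∈ Finset.range n, ((1:ℝ) - x^2 / (((j:ℝ)+1)^2 * π^2)))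
      = ∑ j ∈ Finset.range n, Real.log ((1:ℝ) - x^2 / (((j:ℝ)+1)^2 * π^2)) := by
    intro n
    exact Real.log_prod (fun j _ => (tan_aux_factor_pos hx j).ne')
  have h5 := (tan_aux_summable_log hx).hasSum.tendsto_sum_nat
  refine tendsto_nhds_unique h5 ?_
  refine (h3.congr (fun n => h4 n))

private lemma tan_aux_cot_eq {x : ℝ} (hx0 : x ≠ 0) (hx : |x| < π) :
    Real.cos x / Real.sin x = 1/x + ∑' n : ℕ, -(2*x) / (((n:ℝ)+1)^2 * π^2 - x^2) := by
  have hpi : (0:ℝ) < π := pi_pos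
  have hsinne : Real.sin x ≠ 0 := by
    have := tan_aux_sin_div_pos hx0 hx
    intro h; rw [h] at this; simp at this
  -- derivative of log (sin y / y)
  have hd1 : HasDerivAt (fun y : ℝ => Real.sin y / y)
      ((Real.cos x * x - Real.sin x * 1) / x^2) x :=
    (Real.hasDerivAt_sin x).div (hasDerivAt_id x) hx0
  have hne : Real.sin x / x ≠ 0 := (tan_aux_sin_div_pos hx0 hx).ne'
  have hd2 := hd1.log hne
  -- F agrees with log (sin y / y) near x
  have hopen : IsOpen {y : ℝ | y ≠ 0 ∧ |y| < π} := by
    have h1 : IsOpen {y : ℝ | y ≠ 0} := isOpen_ne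
    have h2 : IsOpen {y : ℝ | |y| < π} := isOpen_lt (continuous_abs) continuous_const
    exact h1.inter h2
  have hmem : {y : ℝ | y ≠ 0 ∧ |y| < π} ∈ nhds x := hopen.mem_nhds ⟨hx0, hx⟩
  have hev : (fun z : ℝ => ∑' n : ℕ, Real.log (1 - z^2 / (((n:ℝ)+1)^2 * π^2)))
      =ᶠ[nhds x] (fun y : ℝ => Real.log (Real.sin y / y)) := by
    filter_upwards [hmem] with y hy
    exact tan_aux_F_eq hy.1 hy.2
  have hd3 := (tan_aux_hasDerivAt_F hx).congr_of_eventuallyEq hev.symm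
  have huniq := hd3.unique hd2
  rw [huniq]
  field_simp
  ring

set_option maxHeartbeats 1000000 in
theorem stmt_4 (x : ℝ) (hx : |x| < π / 2) :
    Real.tan x =
      ∑' k : ℕ, (2 / (π * (2 * (k : ℝ) + 1))) ^ 2 * (2 * x) /
        (1 - (2 * x / (π * (2 * (k : ℝ) + 1))) ^ 2) := by
  have hpi : (0:ℝ) < π := pi_pos
  rcases eq_or_ne x 0 with rfl | hx0
  · simp
  -- basic bounds
  have hxπ : |x| < π := lt_trans hx (by linarith)
  have h2xπ : |2*x| < π := by
    rw [abs_mul, abs_two]; linarith [abs_nonneg x]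
  have h2x0 : 2*x ≠ 0 := by simpa using hx0
  have hx2 : (2*x)^2 < π^2 := by nlinarith [sq_abs (2*x), abs_nonneg (2*x)]
  -- nonvanishing
  have hsinne : Real.sin x ≠ 0 := by
    have := tan_aux_sin_div_pos hx0 hxπ
    intro h; rw [h] at this; simp at this
  have hcosne : Real.cos x ≠ 0 := by
    have : 0 < Real.cos x := Real.cos_pos_of_mem_Ioo ⟨by linarith [(abs_lt.mp hx).1], (abs_lt.mp hx).2⟩
    exact this.ne'
  -- tan x = cot x - 2 cot (2x)
  have hcot1 := tan_aux_cot_eq hx0 hxπ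
  have hcot2 := tan_aux_cot_eq h2x0 h2xπ
  have hsin2 : Real.sin (2*x) = 2 * Real.sin x * Real.cos x := Real.sin_two_mul x
  have hcos2 : Real.cos (2*x) = 2 * Real.cos x ^ 2 - 1 := Real.cos_two_mul x
  have hsin2ne : Real.sin (2*x) ≠ 0 := by
    rw [hsin2]; exact mul_ne_zero (mul_ne_zero two_ne_zero hsinne) hcosne
  have htan : Real.tan x = Real.cos x / Real.sin x - 2 * (Real.cos (2*x) / Real.sin (2*x)) := by
    rw [Real.tan_eq_sin_div_cos, hsin2, hcos2]
    have hpyth := Real.sin_sq_add_cos_sq x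
    field_simp
    linear_combination hpyth
  -- define G sums
  set Gx : ℝ := ∑' n : ℕ, -(2*x) / (((n:ℝ)+1)^2 * π^2 - x^2) with hGx
  set G2x : ℝ := ∑' n : ℕ, -(2*(2*x)) / (((n:ℝ)+1)^2 * π^2 - (2*x)^2) with hG2x
  have htan2 : Real.tan x = Gx - 2 * G2x := by
    rw [htan, hcot1, hcot2, hGx, hG2x]
    ring
  -- the odd/even split
  set f : ℕ → ℝ := fun m => 8*x / (((m:ℝ)+1)^2 * π^2 - 4*x^2) with hf
  have hden4 : ∀ n : ℕ, 0 < ((n:ℝ)+1)^2 * π^2 - 4*x^2 := by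
    intro n
    have := tan_aux_denom_pos h2xπ n
    nlinarith [this]
  have hsumf : Summable f := by
    have h := (tan_aux_summable_G h2xπ).mul_left (-2 : ℝ)
    refine h.congr (fun n => ?_)
    simp only [hf]
    rw [show ((n:ℝ)+1)^2*π^2 - (2*x)^2 = ((n:ℝ)+1)^2*π^2 - 4*x^2 from by ring,
      ← mul_div_assoc]
    congr 1
    ring
  have hse : Summable (fun k : ℕ => f (2*k)) :=
    hsumf.comp_injective (fun a b h => by omega)
  have hso : Summable (fun k : ℕ => f (2*k+1)) :=
    hsumf.comp_injective (fun a b h => by omega)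
  have hsplit := hsumf.hasSum.unique (hse.hasSum.even_add_odd hso.hasSum)
  -- identify ∑' f with -2 * G2x
  have hid1 : (∑' m : ℕ, f m) = -2 * G2x := by
    rw [hG2x, ← tsum_mul_left]
    refine tsum_congr (fun n => ?_)
    simp only [hf]
    rw [show ((n:ℝ)+1)^2*π^2 - (2*x)^2 = ((n:ℝ)+1)^2*π^2 - 4*x^2 from by ring,
      ← mul_div_assoc]
    congr 1
    ring
  -- identify odd part with -Gx
  have hid2 : (∑' k : ℕ, f (2*k+1)) = -Gx := by
    rw [hGx, ← tsum_neg]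
    refine tsum_congr (fun n => ?_)
    have hd := tan_aux_denom_pos hxπ n
    simp only [hf]
    rw [show (((2*n+1 : ℕ):ℝ)+1)^2 * π^2 - 4*x^2 = 4 * (((n:ℝ)+1)^2 * π^2 - x^2) from by
      push_cast; ring]
    rw [neg_div, neg_neg]
    rw [div_eq_div_iff (by linarith) hd.ne']
    ring
  -- hence ∑' even part = tan x
  have heven : (∑' k : ℕ, f (2*k)) = Real.tan x := by
    have : (∑' k : ℕ, f (2*k)) = (∑' m : ℕ, f m) - (∑' k : ℕ, f (2*k+1)) := by
      rw [hsplit]; ring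
    rw [this, hid1, hid2, htan2]; ring
  -- identify the target sum with the even part
  rw [← heven]
  refine tsum_congr (fun k => ?_)
  have hck : (0:ℝ) < 2*(k:ℝ)+1 := by positivity
  have hc : π * (2*(k:ℝ)+1) ≠ 0 := by positivity
  have hDpos : 0 < (2*(k:ℝ)+1)^2 * π^2 - 4*x^2 := by
    have h1 : (1:ℝ) ≤ (2*(k:ℝ)+1)^2 := by nlinarith [(Nat.cast_nonneg k : (0:ℝ) ≤ k)]
    nlinarith [hx2]
  have hcsq : π^2 ≤ (π*(2*(k:ℝ)+1))^2 := by
    nlinarith [(Nat.cast_nonneg k : (0:ℝ) ≤ k), pi_pos, sq_nonneg π,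
      mul_nonneg (Nat.cast_nonneg k : (0:ℝ) ≤ k) (sq_nonneg π)]
  have hcpos : (0:ℝ) < (π*(2*(k:ℝ)+1))^2 := by positivity
  have h1c : 0 < 1 - (2*x/(π*(2*(k:ℝ)+1)))^2 := by
    rw [div_pow, sub_pos, div_lt_one hcpos]
    nlinarith [hx2]
  simp only [hf]
  rw [show (((2*k : ℕ):ℝ)+1)^2 * π^2 - 4*x^2 = (2*(k:ℝ)+1)^2 * π^2 - 4*x^2 from by
    push_cast; ring]
  rw [eq_comm, div_eq_div_iff h1c.ne' hDpos.ne']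
  field_simp
  ring
end

section
/- For all real x with |x| < π/2, tan x = 8x · ∑_{k≥0} 1/((2k+1)^2 π^2 - 4x^2). -/
open Real Filter Finset Topology

private lemma prod_split (y : ℝ) (N : ℕ) :
    (∏ j ∈ Finset.range (2*N), (1 - (2*y/π)^2/((j:ℝ)+1)^2)) =
    (∏ k ∈ Finset.range N, (1 - 4*y^2/((2*(k:ℝ)+1)^2*π^2))) *
      (∏ j ∈ Finset.range N, (1 - (y/π)^2/((j:ℝ)+1)^2)) := by
  have hπ := Real.pi_ne_zero
  induction N with
  | zero => simp
  | succ n ih =>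
    rw [show 2*(n+1) = (2*n)+1+1 by ring, Finset.prod_range_succ, Finset.prod_range_succ,
      Finset.prod_range_succ, Finset.prod_range_succ, ih]
    push_cast
    have key : (1 - (2*y/π)^2/(2*(n:ℝ)+1)^2) * (1 - (2*y/π)^2/(2*(n:ℝ)+1+1)^2) =
        (1 - 4*y^2/((2*(n:ℝ)+1)^2*π^2)) * (1 - (y/π)^2/((n:ℝ)+1)^2) := by
      field_simp
      ring
    linear_combination (∏ k ∈ Finset.range n, (1 - 4*y^2/((2*(k:ℝ)+1)^2*π^2))) *
      (∏ j ∈ Finset.range n, (1 - (y/π)^2/((j:ℝ)+1)^2)) * key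

private lemma factor_pos {y : ℝ} (hy : |y| < π/2) (k : ℕ) :
    0 < 1 - 4*y^2/((2*(k:ℝ)+1)^2*π^2) := by
  have hπ := Real.pi_pos
  have h1 : y^2 < (π/2)^2 := by
    have := sq_abs y
    nlinarith [abs_nonneg y]
  have h2 : (1:ℝ) ≤ (2*(k:ℝ)+1)^2 := by nlinarith [Nat.cast_nonneg (α := ℝ) k]
  have h3 : 4*y^2 < π^2 := by nlinarith
  have h4 : (0:ℝ) < (2*(k:ℝ)+1)^2*π^2 := by nlinarith
  rw [sub_pos, div_lt_one h4]
  nlinarith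

private lemma log_sum_tendsto {y : ℝ} (hy : |y| < π/2) :
    Tendsto (fun N : ℕ => ∑ k ∈ Finset.range N, Real.log (1 - 4*y^2/((2*(k:ℝ)+1)^2*π^2)))
      atTop (𝓝 (Real.log (Real.cos y))) := by
  have hπ := Real.pi_pos
  rcases eq_or_ne y 0 with rfl | hy0
  · simpa using tendsto_const_nhds
  -- y ≠ 0
  have hyπ : -π < y ∧ y < π := by
    have := abs_lt.mp hy; constructor <;> nlinarith [this.1, this.2]
  have hsy : Real.sin y ≠ 0 := by
    rw [ne_eq, Real.sin_eq_zero_iff_of_lt_of_lt hyπ.1 hyπ.2]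
    exact hy0
  have hcy : 0 < Real.cos y := by
    have := abs_lt.mp hy
    exact Real.cos_pos_of_mem_Ioo ⟨this.1, this.2⟩
  -- Euler product for sin y
  have hP : Tendsto (fun N : ℕ => ∏ j ∈ Finset.range N, (1 - (y/π)^2/((j:ℝ)+1)^2))
      atTop (𝓝 (Real.sin y / y)) := by
    have h := Real.tendsto_euler_sin_prod (y/π)
    rw [show π * (y/π) = y by field_simp] at h
    have := h.div_const y
    refine this.congr fun N => ?_
    rw [mul_comm, mul_div_assoc, div_self hy0, mul_one]
  -- Euler product for sin (2y), along even indices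
  have h2N : Tendsto (fun N : ℕ => 2*N) atTop atTop :=
    tendsto_atTop_atTop_of_monotone (fun a b h => by omega) (fun b => ⟨b, by omega⟩)
  have hQ : Tendsto (fun N : ℕ => ∏ j ∈ Finset.range (2*N), (1 - (2*y/π)^2/((j:ℝ)+1)^2))
      atTop (𝓝 (Real.sin (2*y) / (2*y))) := by
    have h := Real.tendsto_euler_sin_prod (2*y/π)
    rw [show π * (2*y/π) = 2*y by field_simp] at h
    have h' := (h.div_const (2*y)).comp h2N
    refine h'.congr fun N => ?_
    simp only [Function.comp_apply]
    rw [mul_comm, mul_div_assoc, div_self (by simpa using hy0 : (2:ℝ)*y ≠ 0), mul_one]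
  have hPy : Real.sin y / y ≠ 0 := div_ne_zero hsy hy0
  have hprod : Tendsto (fun N : ℕ => ∏ k ∈ Finset.range N, (1 - 4*y^2/((2*(k:ℝ)+1)^2*π^2)))
      atTop (𝓝 (Real.cos y)) := by
    have h := hQ.div hP hPy
    have heq : Real.sin (2*y) / (2*y) / (Real.sin y / y) = Real.cos y := by
      rw [Real.sin_two_mul]; field_simp
    rw [heq] at h
    refine h.congr fun N => ?_
    simp only [Pi.div_apply]
    rw [prod_split]
    rw [mul_div_assoc, div_self, mul_one]
    exact Finset.prod_ne_zero_iff.mpr fun j _ => by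
      have : (y/π)^2/((j:ℝ)+1)^2 < 1 := by
        have h1 : y^2 < (π/2)^2 := by nlinarith [sq_abs y, abs_nonneg y, abs_lt.mp hy]
        have hj : (1:ℝ) ≤ ((j:ℝ)+1)^2 := by nlinarith [Nat.cast_nonneg (α := ℝ) j]
        have : (y/π)^2 < 1 := by
          rw [div_pow, div_lt_one (by positivity)]
          nlinarith
        calc (y/π)^2/((j:ℝ)+1)^2 ≤ (y/π)^2 := by
              apply div_le_self (by positivity) hj
          _ < 1 := this
      nlinarith
  have := ((Real.continuousAt_log hcy.ne').tendsto).comp hprod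
  refine this.congr fun N => ?_
  simp only [Function.comp_apply]
  rw [Real.log_prod]
  exact fun k _ => (factor_pos hy k).ne'

private lemma term_hasDeriv {y : ℝ} (hy : |y| < π/2) (k : ℕ) :
    HasDerivAt (fun y : ℝ => Real.log (1 - 4*y^2/((2*(k:ℝ)+1)^2*π^2)))
      (-(8*y) / ((2*(k:ℝ)+1)^2*π^2 - 4*y^2)) y := by
  have hπ := Real.pi_pos
  set c := (2*(k:ℝ)+1)^2*π^2 with hc_def
  have hc : 0 < c := by
    have : (1:ℝ) ≤ (2*(k:ℝ)+1)^2 := by nlinarith [Nat.cast_nonneg (α := ℝ) k]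
    nlinarith
  have h0 : 1 - 4*y^2/c ≠ 0 := (factor_pos hy k).ne'
  have hlt : 4*y^2 < c := by
    have := factor_pos hy k
    rw [sub_pos, div_lt_one hc] at this
    exact this
  have hcd : c - 4*y^2 ≠ 0 := sub_ne_zero.mpr hlt.ne'
  have h1 : HasDerivAt (fun y : ℝ => 1 - 4*y^2/c) (-(8*y)/c) y := by
    have h2 := (((hasDerivAt_pow 2 y).const_mul (4:ℝ)).div_const c).const_sub 1
    refine h2.congr_deriv ?_
    push_cast; ring
  have h3 := h1.log h0
  convert h3 using 1
  field_simp

theorem stmt_5 (x : ℝ) (hx : |x| < π / 2) :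
    Real.tan x =
      8 * x * ∑' k : ℕ, 1 / ((2 * (k : ℝ) + 1) ^ 2 * π ^ 2 - 4 * x ^ 2) := by
  have hπ := Real.pi_pos
  set r : ℝ := (|x| + π/2)/2 with hrdef
  have hxr : |x| < r := by rw [hrdef]; linarith
  have hrπ : r < π/2 := by rw [hrdef]; linarith [abs_nonneg x]
  have hr0 : 0 < r := lt_of_le_of_lt (abs_nonneg x) hxr
  have hd : 0 < π^2 - 4*r^2 := by nlinarith
  set s : Set ℝ := Set.Ioo (-r) r with hsdef
  have hx_s : x ∈ s := by
    have := abs_lt.mp hxr; exact ⟨this.1, this.2⟩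
  have habs : ∀ y ∈ s, |y| < r := fun y hy => abs_lt.mpr ⟨hy.1, hy.2⟩
  have hmem : ∀ y ∈ s, |y| < π/2 := fun y hy => lt_trans (habs y hy) hrπ
  -- lower bound for denominators
  have hden : ∀ y : ℝ, |y| ≤ r → ∀ k : ℕ,
      ((k:ℝ)+1)^2 * (π^2 - 4*r^2) ≤ (2*(k:ℝ)+1)^2*π^2 - 4*y^2 := by
    intro y hy k
    have hk : (0:ℝ) ≤ (k:ℝ) := Nat.cast_nonneg k
    have hy2 : y^2 ≤ r^2 := by nlinarith [sq_abs y, abs_nonneg y]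
    have hk1 : (1:ℝ) ≤ ((k:ℝ)+1)^2 := by nlinarith
    have h5 : 4*y^2 ≤ 4*r^2*((k:ℝ)+1)^2 := by
      nlinarith [mul_le_mul_of_nonneg_left hk1 (show (0:ℝ) ≤ 4*r^2 by positivity)]
    have h6 : ((k:ℝ)+1)^2*π^2 ≤ (2*(k:ℝ)+1)^2*π^2 :=
      mul_le_mul_of_nonneg_right (by nlinarith) (sq_nonneg π)
    nlinarith
  have hdenpos : ∀ y ∈ s, ∀ k : ℕ, 0 < (2*(k:ℝ)+1)^2*π^2 - 4*y^2 := by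
    intro y hy k
    have h1 := hden y (habs y hy).le k
    have hk : (0:ℝ) ≤ (k:ℝ) := Nat.cast_nonneg k
    nlinarith
  -- summable majorant
  have hu : Summable (fun k : ℕ => 8*r / (((k:ℝ)+1)^2 * (π^2 - 4*r^2))) := by
    have h1 : Summable (fun k : ℕ => 1 / ((k:ℝ)+1)^2) := by
      have := (summable_nat_add_iff 1).mpr (Real.summable_one_div_nat_pow.mpr one_lt_two)
      refine this.congr fun n => ?_
      push_cast; ring
    have h2 := h1.mul_left (8*r / (π^2 - 4*r^2))
    refine h2.congr fun k => ?_
    field_simp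
  set F' : ℕ → ℝ → ℝ := fun k y => -(8*y) / ((2*(k:ℝ)+1)^2*π^2 - 4*y^2) with hF'
  have hbound : ∀ (n : ℕ), ∀ y ∈ s, ‖F' n y‖ ≤ 8*r / (((n:ℝ)+1)^2 * (π^2 - 4*r^2)) := by
    intro n y hy
    have hD := hdenpos y hy n
    have h8 : |(-(8*y))| = 8*|y| := by rw [abs_neg, abs_mul]; norm_num
    rw [hF', Real.norm_eq_abs, abs_div, abs_of_pos hD, h8]
    exact div_le_div₀ (by positivity) (by have := habs y hy; linarith)
      (mul_pos (by positivity) hd) (hden y (habs y hy).le n)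
  have hUnif := tendstoUniformlyOn_tsum_nat hu hbound
  have hderiv : ∀ᶠ N in atTop, ∀ y ∈ s,
      HasDerivAt (fun z => ∑ k ∈ Finset.range N, Real.log (1 - 4*z^2/((2*(k:ℝ)+1)^2*π^2)))
        (∑ k ∈ Finset.range N, F' k y) y := by
    filter_upwards with N y hy
    exact HasDerivAt.fun_sum fun k _ => term_hasDeriv (hmem y hy) k
  have hptwise : ∀ y ∈ s,
      Tendsto (fun N : ℕ => ∑ k ∈ Finset.range N, Real.log (1 - 4*y^2/((2*(k:ℝ)+1)^2*π^2)))
        atTop (𝓝 (Real.log (Real.cos y))) := fun y hy => log_sum_tendsto (hmem y hy)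
  have key : HasDerivAt (fun y => Real.log (Real.cos y)) (∑' k, F' k x) x :=
    hasDerivAt_of_tendstoUniformlyOn isOpen_Ioo hUnif hderiv hptwise hx_s
  have h2 : HasDerivAt (fun y => Real.log (Real.cos y)) (-Real.tan x) x := by
    have hc : Real.cos x ≠ 0 := by
      have := abs_lt.mp hx
      exact (Real.cos_pos_of_mem_Ioo ⟨this.1, this.2⟩).ne'
    have h3 := (Real.hasDerivAt_cos x).log hc
    convert h3 using 1
    rw [Real.tan_eq_sin_div_cos]
    ring
  have hEq : ∑' k, F' k x = -Real.tan x := key.unique h2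
  have hsum : ∑' k, F' k x = (-(8*x)) * ∑' k : ℕ, 1 / ((2*(k:ℝ)+1)^2*π^2 - 4*x^2) := by
    rw [← tsum_mul_left]
    refine tsum_congr fun k => ?_
    rw [hF']
    ring
  rw [hsum] at hEq
  linarith
end

section
/- For all real x, cos x = ∏_{k≥0} (1 - (2x/((2k+1)π))^2), where the infinite product converges. -/
open Real Finset Filter


lemma aux_base (m : ℕ) :
    ∏ j ∈ range m, (2 * (j:ℝ) + 1 - 2 * m) = (-1)^m * ∏ j ∈ range m, (2 * (j:ℝ) + 1) := by
  induction m with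
  | zero => simp
  | succ m ih =>
      have key : ∏ j ∈ range m, (2 * ((j:ℝ) + 1) + 1 - 2 * ((m:ℝ) + 1))
          = ∏ j ∈ range m, (2 * (j:ℝ) + 1 - 2 * (m:ℝ)) :=
        Finset.prod_congr rfl (fun j _ => by ring)
      rw [Finset.prod_range_succ', Finset.prod_range_succ]
      push_cast
      rw [key, ih]
      ring

lemma odd_sub_ne (m N j : ℕ) : (2 * ((N:ℝ) + j) + 1 - 2 * m) ≠ 0 := by
  intro h
  have h2 : ((2 * (N + j) + 1 : ℕ) : ℝ) = ((2 * m : ℕ) : ℝ) := by push_cast; linarith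
  have := Nat.cast_injective h2
  omega

noncomputable def hterm (m N j : ℕ) : ℝ :=
  (2 * ((N:ℝ) + j) + 1) / (2 * ((N:ℝ) + j) + 1 - 2 * m)

lemma hterm_succ (m N j : ℕ) : hterm m (N+1) j = hterm m N (j+1) := by
  unfold hterm; push_cast; ring_nf

lemma hterm_ne (m N j : ℕ) : hterm m N j ≠ 0 :=
  div_ne_zero (by positivity) (odd_sub_ne m N j)

lemma aux_closed (m N : ℕ) :
    ∏ k ∈ range N, (1 - (2 * (m:ℝ) / (2 * k + 1))^2)
      = (-1)^m * ∏ j ∈ range m, hterm m N j := by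
  induction N with
  | zero =>
      rw [range_zero, prod_empty]
      unfold hterm
      simp only [Nat.cast_zero, zero_add]
      rw [Finset.prod_div_distrib, aux_base m]
      have hP : (0:ℝ) < ∏ j ∈ range m, (2 * (j:ℝ) + 1) :=
        Finset.prod_pos fun j _ => by positivity
      rw [mul_div_assoc', div_self]
      exact mul_ne_zero (by positivity) hP.ne'
  | succ N ih =>
      rw [Finset.prod_range_succ, ih]
      have e1 : ∏ j ∈ range m, hterm m (N+1) j = ∏ j ∈ range m, hterm m N (j+1) :=
        Finset.prod_congr rfl fun j _ => hterm_succ m N j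
      rw [e1]
      have hshift : (∏ j ∈ range m, hterm m N (j+1)) * hterm m N 0
          = (∏ j ∈ range m, hterm m N j) * hterm m N m := by
        rw [← Finset.prod_range_succ', Finset.prod_range_succ]
      have hTm : (1 - (2 * (m:ℝ) / (2 * N + 1))^2) * hterm m N 0 = hterm m N m := by
        have h1 : (2 * (N:ℝ) + 1) ≠ 0 := by positivity
        have h2 : (2 * (N:ℝ) + 1 - 2 * m) ≠ 0 := by
          have := odd_sub_ne m N 0; simpa using this
        have e0 : hterm m N 0 = (2 * (N:ℝ) + 1) / (2 * (N:ℝ) + 1 - 2 * m) := by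
          unfold hterm; norm_num
        have em : hterm m N m = (2 * ((N:ℝ) + m) + 1) / (2 * (N:ℝ) + 1) := by
          unfold hterm; congr 1; ring
        rw [e0, em]
        field_simp
        ring
      apply mul_right_cancel₀ (hterm_ne m N 0)
      calc ((-1:ℝ)^m * ∏ j ∈ range m, hterm m N j) * (1 - (2 * (m:ℝ) / (2 * N + 1))^2)
            * hterm m N 0
          = (-1:ℝ)^m * ((∏ j ∈ range m, hterm m N j) * hterm m N m) := by rw [← hTm]; ring
        _ = (-1:ℝ)^m * ((∏ j ∈ range m, hterm m N (j+1)) * hterm m N 0) := by rw [hshift]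
        _ = ((-1:ℝ)^m * ∏ j ∈ range m, hterm m N (j+1)) * hterm m N 0 := by ring


lemma aux_factor_tendsto (c d : ℝ) :
    Tendsto (fun N : ℕ => (2 * N + c) / (2 * N + d)) atTop (nhds 1) := by
  have hd : Tendsto (fun N : ℕ => 2 * (N:ℝ) + d) atTop atTop := by
    apply Filter.tendsto_atTop_add_const_right
    exact (tendsto_natCast_atTop_atTop).const_mul_atTop (by norm_num)
  have h0 : Tendsto (fun N : ℕ => (c - d) / (2 * (N:ℝ) + d)) atTop (nhds 0) :=
    Tendsto.div_atTop tendsto_const_nhds hd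
  have h1 : Tendsto (fun N : ℕ => 1 + (c - d) / (2 * (N:ℝ) + d)) atTop (nhds 1) := by
    simpa using tendsto_const_nhds.add h0
  apply h1.congr'
  filter_upwards [hd.eventually_gt_atTop 0] with N hN
  field_simp
  ring

lemma tendsto_m (m : ℕ) :
    Tendsto (fun N : ℕ => (-1:ℝ)^m * ∏ j ∈ Finset.range m, hterm m N j) atTop (nhds ((-1)^m)) := by
  have h1 : Tendsto (fun N : ℕ => ∏ j ∈ range m, hterm m N j) atTop
      (nhds (∏ _j ∈ range m, (1:ℝ))) := by
    apply tendsto_finset_prod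
    intro j _
    have := aux_factor_tendsto (2*(j:ℝ)+1) (2*(j:ℝ)+1-2*(m:ℝ))
    apply this.congr
    intro N
    unfold hterm
    ring_nf
  simpa using tendsto_const_nhds.mul h1

lemma interleave (x : ℝ) (n : ℕ) :
    ∏ j ∈ range (2*n), (1 - (2*x/π)^2 / ((j:ℝ)+1)^2)
      = (∏ k ∈ range n, (1 - (2 * x / ((2 * (k : ℝ) + 1) * π)) ^ 2))
        * ∏ j ∈ range n, (1 - (x/π)^2 / ((j:ℝ)+1)^2) := by
  induction n with
  | zero => simp
  | succ n ih =>
      have h2 : 2*(n+1) = (2*n) + 1 + 1 := by ring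
      rw [h2, Finset.prod_range_succ, Finset.prod_range_succ,
        Finset.prod_range_succ, Finset.prod_range_succ, ih]
      push_cast
      have hπ := Real.pi_ne_zero
      have hn1 : (2*(n:ℝ)+1) ≠ 0 := by positivity
      have hn2 : ((n:ℝ)+1) ≠ 0 := by positivity
      have hn3 : (2*(n:ℝ)+1+1) ≠ 0 := by positivity
      generalize (∏ k ∈ range n, (1 - (2 * x / ((2 * (k : ℝ) + 1) * π)) ^ 2)) = A
      generalize (∏ j ∈ range n, (1 - (x/π)^2 / ((j:ℝ)+1)^2)) = B
      field_simp
      ring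

lemma eulerP (y : ℝ) :
    Tendsto (fun n : ℕ => y * ∏ j ∈ range n, (1 - (y/π)^2 / ((j:ℝ)+1)^2))
      atTop (nhds (Real.sin y)) := by
  have h := Real.tendsto_euler_sin_prod (y/π)
  rw [mul_div_cancel₀ _ Real.pi_ne_zero] at h
  exact h

lemma main_tendsto_ne (x : ℝ) (hs : Real.sin x ≠ 0) :
    Tendsto (fun n : ℕ => ∏ k ∈ range n, (1 - (2 * x / ((2 * (k : ℝ) + 1) * π)) ^ 2))
      atTop (nhds (Real.cos x)) := by
  have hx : x ≠ 0 := by rintro rfl; simp at hs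
  set P : ℕ → ℝ := fun n => ∏ k ∈ range n, (1 - (2 * x / ((2 * (k : ℝ) + 1) * π)) ^ 2) with hP
  set Q : ℕ → ℝ := fun n => ∏ j ∈ range n, (1 - (x/π)^2 / ((j:ℝ)+1)^2) with hQ
  have hQne : ∀ n, Q n ≠ 0 := by
    intro n
    apply Finset.prod_ne_zero_iff.mpr
    intro j _ hzero
    have hj : ((j:ℝ)+1) ≠ 0 := by positivity
    have hx2 : x^2 = (((j:ℝ)+1)*π)^2 := by
      field_simp at hzero
      nlinarith [hzero]
    have : x = ((j:ℝ)+1)*π ∨ x = -(((j:ℝ)+1)*π) := sq_eq_sq_iff_eq_or_eq_neg.mp hx2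
    rcases this with h | h
    · apply hs
      rw [h]
      have := Real.sin_nat_mul_pi (j+1)
      push_cast at this
      exact this
    · apply hs
      rw [h, Real.sin_neg]
      have := Real.sin_nat_mul_pi (j+1)
      push_cast at this
      simp [this]
  have hB : Tendsto (fun n => x * Q n) atTop (nhds (Real.sin x)) := eulerP x
  have hA := (eulerP (2*x)).comp (tendsto_id.const_mul_atTop' (two_pos) : Tendsto (fun n : ℕ => 2*n) atTop atTop)
  have hA2 : Tendsto (fun n : ℕ => 2*x*(P n * Q n)) atTop (nhds (Real.sin (2*x))) := by
    apply hA.congr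
    intro n
    simp only [Function.comp_apply]
    rw [interleave x n]
  have hden : Tendsto (fun n => 2*(x * Q n)) atTop (nhds (2*Real.sin x)) := hB.const_mul 2
  have hdiv : Tendsto (fun n => (2*x*(P n * Q n)) / (2*(x*Q n))) atTop
      (nhds (Real.sin (2*x) / (2*Real.sin x))) :=
    hA2.div hden (by simp [hs])
  have hval : Real.sin (2*x) / (2*Real.sin x) = Real.cos x := by
    rw [Real.sin_two_mul]; field_simp
  rw [hval] at hdiv
  apply hdiv.congr
  intro n
  have h1 : x * Q n ≠ 0 := mul_ne_zero hx (hQne n)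
  field_simp
  exact mul_inv_cancel_right₀ (hQne n) _

lemma mult_aux (f : ℕ → ℝ) (K : ℕ) (h : Multipliable fun n => f (n + K)) : Multipliable f := by
  have h1 : Multipliable (fun n : {x // x ∉ Finset.range K} => f n) := by
    apply (Equiv.multipliable_iff (notMemRangeEquiv K).symm).mp
    apply h.congr
    intro n
    rw [Function.comp_apply, coe_notMemRangeEquiv_symm]
  apply Multipliable.mul_compl (s := (Finset.range K : Set ℕ)) Multipliable.of_finite
  exact h1

lemma summable_a (x : ℝ) : Summable (fun k : ℕ => (2 * x / ((2 * (k : ℝ) + 1) * π)) ^ 2) := by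
  have hbase : Summable (fun k : ℕ => 1 / ((k : ℝ) + 1) ^ 2) := by
    have := (summable_nat_add_iff (f := fun n : ℕ => 1 / (n : ℝ) ^ 2) 1).mpr
      (summable_one_div_nat_pow.mpr one_lt_two)
    apply this.congr
    intro n
    push_cast
    ring
  apply Summable.of_nonneg_of_le (fun k => sq_nonneg _) (fun k => ?_) (hbase.mul_left ((2*x/π)^2))
  have hk1 : (0:ℝ) < (k:ℝ) + 1 := by positivity
  have hk2 : ((k:ℝ) + 1) ≤ 2 * k + 1 := by push_cast; linarith [Nat.cast_nonneg (α := ℝ) k]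
  have hπ := Real.pi_pos
  have h1 : (2 * x / ((2 * (k : ℝ) + 1) * π)) ^ 2 = (2*x/π)^2 * (1/(2*(k:ℝ)+1)^2) := by
    field_simp
  rw [h1]
  apply mul_le_mul_of_nonneg_left _ (sq_nonneg _)
  apply div_le_div_of_nonneg_left one_pos.le (by positivity)
  apply pow_le_pow_left₀ hk1.le hk2
lemma mult (x : ℝ) :
    Multipliable (fun k : ℕ => 1 - (2 * x / ((2 * (k : ℝ) + 1) * π)) ^ 2) := by
  set a : ℕ → ℝ := fun k => (2 * x / ((2 * (k : ℝ) + 1) * π)) ^ 2 with ha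
  have hs := summable_a x
  obtain ⟨K, hK⟩ : ∃ K : ℕ, ∀ k ≥ K, a k < 1/2 := by
    have := hs.tendsto_atTop_zero
    have h2 := this.eventually (gt_mem_nhds (by norm_num : (0:ℝ) < 1/2))
    exact eventually_atTop.mp h2
  apply mult_aux _ K
  have hpos : ∀ n : ℕ, 0 < 1 - a (n + K) := by
    intro n
    have := hK (n + K) (Nat.le_add_left K n)
    linarith
  have hlog : Summable fun n : ℕ => Real.log (1 - a (n + K)) := by
    apply Summable.of_abs
    apply Summable.of_nonneg_of_le (fun n => abs_nonneg _) (fun n => ?_)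
      (((summable_nat_add_iff K).mpr hs).mul_left 2)
    have h1 : a (n + K) < 1/2 := hK (n + K) (Nat.le_add_left K n)
    have h0 : 0 ≤ a (n + K) := sq_nonneg _
    set t : ℝ := 1 - a (n + K) with ht
    have htpos : (0:ℝ) < t := by simp only [ht]; linarith
    have hlt : Real.log t ≤ 0 := Real.log_nonpos htpos.le (by simp only [ht]; linarith)
    rw [abs_of_nonpos hlt, ← Real.log_inv]
    have h2 : Real.log t⁻¹ ≤ t⁻¹ - 1 := Real.log_le_sub_one_of_pos (by positivity)
    have h3 : t⁻¹ - 1 ≤ 2 * a (n + K) := by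
      rw [inv_eq_one_div]
      rw [div_sub' htpos.ne']
      rw [div_le_iff₀ htpos]
      nlinarith
    have h4 : 2 * (2 * x / ((2 * ((n + K : ℕ) : ℝ) + 1) * π)) ^ 2 = 2 * a (n + K) := rfl
    rw [h4]
    linarith
  exact Real.multipliable_of_summable_log hpos hlog
lemma main_tendsto_zero (x : ℝ) (hs : Real.sin x = 0) :
    Tendsto (fun n : ℕ => ∏ k ∈ range n, (1 - (2 * x / ((2 * (k : ℝ) + 1) * π)) ^ 2))
      atTop (nhds (Real.cos x)) := by
  obtain ⟨m, hm⟩ := Real.sin_eq_zero_iff.mp hs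
  set n : ℕ := m.natAbs with hn
  have hm2 : ((m:ℝ))^2 = ((n:ℝ))^2 := by
    rw [hn, Nat.cast_natAbs, Int.cast_abs, sq_abs]
  have hterm_eq : ∀ k : ℕ, 1 - (2 * x / ((2 * (k : ℝ) + 1) * π)) ^ 2
      = 1 - (2 * (n:ℝ) / (2 * k + 1))^2 := by
    intro k
    have hc : (2*(k:ℝ)+1) ≠ 0 := by positivity
    have : 2 * x / ((2 * (k : ℝ) + 1) * π) = 2 * (m:ℝ) / (2 * k + 1) := by
      rw [← hm]
      rw [show 2 * ((m:ℝ) * π) = (2 * (m:ℝ)) * π by ring]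
      rw [mul_comm (2*(k:ℝ)+1) π, ← div_div, mul_div_assoc, mul_div_assoc]
      rw [div_self Real.pi_ne_zero]
      ring
    rw [this, div_pow, div_pow, mul_pow, mul_pow, hm2]
  have hcos : Real.cos x = (-1:ℝ)^n := by
    have habs : |x| = (n:ℝ) * π := by
      rw [← hm, abs_mul, abs_of_pos Real.pi_pos, hn, Nat.cast_natAbs, Int.cast_abs]
    rw [← Real.cos_abs, habs]
    have := Real.cos_nat_mul_pi_sub 0 n
    simpa using this
  rw [hcos]
  have h1 := tendsto_m n
  apply h1.congr
  intro N
  rw [← aux_closed n N]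
  exact (Finset.prod_congr rfl fun k _ => (hterm_eq k).symm)

theorem stmt_6 (x : ℝ) :
    Multipliable (fun k : ℕ => 1 - (2 * x / ((2 * (k : ℝ) + 1) * π)) ^ 2) ∧
      Real.cos x = ∏' k : ℕ, (1 - (2 * x / ((2 * (k : ℝ) + 1) * π)) ^ 2) := by
  have hM := mult x
  have ht : Tendsto (fun n : ℕ => ∏ k ∈ range n, (1 - (2 * x / ((2 * (k : ℝ) + 1) * π)) ^ 2))
      atTop (nhds (Real.cos x)) := by
    by_cases hs : Real.sin x = 0
    · exact main_tendsto_zero x hs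
    · exact main_tendsto_ne x hs
  exact ⟨hM, tendsto_nhds_unique ht hM.hasProd.tendsto_prod_nat⟩
end

section
/- For all real x, cosh x = ∏_{k≥0} (1 + (2x/((2k+1)π))^2), where the infinite product converges. -/
open Real Filter Finset Topology

/-- Euler product for sinh, as a limit of partial products. -/
lemma sinh_prod_tendsto (t : ℝ) :
    Tendsto (fun n : ℕ => π * t * ∏ j ∈ Finset.range n, ((1 : ℝ) + t ^ 2 / ((j : ℝ) + 1) ^ 2))
      atTop (𝓝 (Real.sinh (π * t))) := by
  have h := (Complex.continuous_im.tendsto _).comp (Complex.tendsto_euler_sin_prod (t * Complex.I))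
  have key : ∀ n : ℕ,
      ((π : ℂ) * (t * Complex.I) *
        ∏ j ∈ Finset.range n, (1 - (t * Complex.I) ^ 2 / ((j : ℂ) + 1) ^ 2)).im
      = π * t * ∏ j ∈ Finset.range n, ((1 : ℝ) + t ^ 2 / ((j : ℝ) + 1) ^ 2) := by
    intro n
    have hp : (∏ j ∈ Finset.range n, (1 - ((t:ℂ) * Complex.I) ^ 2 / ((j : ℂ) + 1) ^ 2))
        = ((∏ j ∈ Finset.range n, ((1 : ℝ) + t ^ 2 / ((j : ℝ) + 1) ^ 2) : ℝ) : ℂ) := by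
      push_cast
      apply Finset.prod_congr rfl
      intro j _
      rw [mul_pow, Complex.I_sq]
      ring
    rw [hp]
    have : ((π : ℂ) * (↑t * Complex.I) *
        ((∏ j ∈ Finset.range n, ((1 : ℝ) + t ^ 2 / ((j : ℝ) + 1) ^ 2) : ℝ) : ℂ))
        = (((π * t * ∏ j ∈ Finset.range n, ((1 : ℝ) + t ^ 2 / ((j : ℝ) + 1) ^ 2) : ℝ)) : ℂ) *
          Complex.I := by push_cast; ring
    rw [this, Complex.mul_I_im, Complex.ofReal_re]
  have hval : (Complex.sin (π * (t * Complex.I))).im = Real.sinh (π * t) := by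
    have : (π : ℂ) * (t * Complex.I) = ((π * t : ℝ) : ℂ) * Complex.I := by push_cast; ring
    rw [this, Complex.sin_mul_I, Complex.mul_I_im, ← Complex.ofReal_sinh, Complex.ofReal_re]
  rw [← hval]
  exact h.congr (fun n => key n)

theorem stmt_7 (x : ℝ) :
    Multipliable (fun k : ℕ => 1 + (2 * x / ((2 * (k : ℝ) + 1) * π)) ^ 2) ∧
      Real.cosh x = ∏' k : ℕ, (1 + (2 * x / ((2 * (k : ℝ) + 1) * π)) ^ 2) := by
  set f : ℕ → ℝ := fun k : ℕ => 1 + (2 * x / ((2 * (k : ℝ) + 1) * π)) ^ 2 with hf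
  have hf1 : ∀ k, (1 : ℝ) ≤ f k := fun k => le_add_of_nonneg_right (sq_nonneg _)
  have hfpos : ∀ k, (0 : ℝ) < f k := fun k => lt_of_lt_of_le one_pos (hf1 k)
  -- Multipliable
  have hsum : Summable fun k : ℕ => Real.log (f k) := by
    have hbase : Summable fun k : ℕ => (2 * x / π) ^ 2 * (1 / ((k : ℝ) + 1) ^ 2) := by
      have h2 : Summable fun k : ℕ => 1 / ((k : ℝ) ^ 2) :=
        (Real.summable_one_div_nat_pow (p := 2)).mpr one_lt_two
      have h3 : Summable fun k : ℕ => 1 / (((k : ℝ) + 1) ^ 2) := by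
        have := (summable_nat_add_iff (f := fun k : ℕ => 1 / ((k : ℝ) ^ 2)) 1).mpr h2
        exact this.congr (by intro k; push_cast; ring_nf)
      exact h3.mul_left _
    refine Summable.of_nonneg_of_le (fun k => Real.log_nonneg (hf1 k)) (fun k => ?_) hbase
    have h1 : Real.log (f k) ≤ f k - 1 := Real.log_le_sub_one_of_pos (hfpos k)
    have h2 : f k - 1 = (2 * x / ((2 * (k : ℝ) + 1) * π)) ^ 2 := by simp [hf]
    refine h1.trans ?_
    rw [h2]
    have hk1 : ((k : ℝ) + 1) ≤ 2 * (k : ℝ) + 1 := by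
      have : (0:ℝ) ≤ (k:ℝ) := Nat.cast_nonneg k
      linarith
    have hπ : (0 : ℝ) < π := Real.pi_pos
    have hden : ((k : ℝ) + 1) * π ≤ (2 * (k : ℝ) + 1) * π :=
      mul_le_mul_of_nonneg_right hk1 hπ.le
    have hdpos : (0 : ℝ) < ((k : ℝ) + 1) * π := by positivity
    calc (2 * x / ((2 * (k : ℝ) + 1) * π)) ^ 2
        ≤ (2 * x / (((k : ℝ) + 1) * π)) ^ 2 := by
          rw [div_pow, div_pow]
          apply div_le_div_of_nonneg_left (sq_nonneg _) (by positivity)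
          exact pow_le_pow_left₀ hdpos.le hden 2
      _ = (2 * x / π) ^ 2 * (1 / ((k : ℝ) + 1) ^ 2) := by
          have h0 : ((k : ℝ) + 1) ≠ 0 := by positivity
          have hπ0 : π ≠ 0 := hπ.ne'
          field_simp
  have hm : Multipliable f := by
    refine ⟨Real.exp (∑' k, Real.log (f k)), ?_⟩
    have h := hsum.hasSum.rexp
    have he : (rexp ∘ fun k => Real.log (f k)) = f := by
      funext k
      exact Real.exp_log (hfpos k)
    rwa [he] at h
  refine ⟨hm, ?_⟩
  -- compute the value
  have htend : Tendsto (fun n : ℕ => ∏ k ∈ Finset.range n, f k) atTop (𝓝 (Real.cosh x)) := by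
    rcases eq_or_ne x 0 with rfl | hx
    · simp only [hf]
      simp [Real.cosh_zero]
    · have hπ : (0 : ℝ) < π := Real.pi_pos
      set t : ℝ := x / π with ht
      have htne : t ≠ 0 := div_ne_zero hx hπ.ne'
      set P : ℕ → ℝ → ℝ := fun n s => ∏ j ∈ Finset.range n, ((1 : ℝ) + s ^ 2 / ((j : ℝ) + 1) ^ 2)
        with hP
      have hPpos : ∀ n s, 0 < P n s := by
        intro n s
        apply Finset.prod_pos
        intro j _
        positivity
      have hkey : ∀ n : ℕ, P (2 * n) (2 * t) = (∏ k ∈ Finset.range n, f k) * P n t := by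
        intro n
        induction n with
        | zero => simp [hP]
        | succ n ih =>
          have h2 : 2 * (n + 1) = 2 * n + 1 + 1 := by ring
          rw [h2]
          simp only [hP] at ih ⊢
          rw [Finset.prod_range_succ, Finset.prod_range_succ, Finset.prod_range_succ,
            Finset.prod_range_succ, ih]
          have e1 : (1 : ℝ) + (2 * t) ^ 2 / ((2 * n : ℕ) + 1) ^ 2 = f n := by
            simp only [hf, ht]
            push_cast
            field_simp
          have e2 : (1 : ℝ) + (2 * t) ^ 2 / (((2 * n + 1 : ℕ) : ℝ) + 1) ^ 2
              = 1 + t ^ 2 / ((n : ℝ) + 1) ^ 2 := by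
            push_cast
            have hne : ((2 : ℝ) * n + 1 + 1) ≠ 0 := by positivity
            field_simp
            ring
          push_cast
          push_cast at e1 e2
          rw [e1, e2]
          ring
      -- limits
      have hA : Tendsto (fun n : ℕ => π * (2 * t) * P (2 * n) (2 * t)) atTop
          (𝓝 (Real.sinh (π * (2 * t)))) := by
        have := (sinh_prod_tendsto (2 * t)).comp
          (tendsto_atTop_mono (fun n => by omega : ∀ n : ℕ, n ≤ 2 * n) tendsto_id)
        exact this
      have hB : Tendsto (fun n : ℕ => π * t * P n t) atTop (𝓝 (Real.sinh (π * t))) :=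
        sinh_prod_tendsto t
      have hsinh_ne : Real.sinh (π * t) ≠ 0 := by
        rw [Real.sinh_ne_zero]
        exact mul_ne_zero hπ.ne' htne
      have hdiv : Tendsto (fun n : ℕ => (π * (2 * t) * P (2 * n) (2 * t)) / (2 * (π * t * P n t)))
          atTop (𝓝 (Real.sinh (π * (2 * t)) / (2 * Real.sinh (π * t)))) :=
        hA.div (hB.const_mul 2) (by positivity)
      have heq : ∀ n : ℕ, (π * (2 * t) * P (2 * n) (2 * t)) / (2 * (π * t * P n t))
          = ∏ k ∈ Finset.range n, f k := by
        intro n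
        rw [hkey n]
        have hPn := hPpos n t
        field_simp
      have hval : Real.sinh (π * (2 * t)) / (2 * Real.sinh (π * t)) = Real.cosh x := by
        have : π * (2 * t) = 2 * (π * t) := by ring
        rw [this, Real.sinh_two_mul]
        have hx' : π * t = x := by rw [ht]; field_simp [hπ.ne']
        rw [hx']
        field_simp [Real.sinh_ne_zero.mpr hx]
      rw [← hval]
      exact hdiv.congr heq
  exact tendsto_nhds_unique htend hm.hasProd.tendsto_prod_nat
end

section
/- For all real x, cosh x · cos x = ∏_{k≥0} (1 - (2x/((2k+1)π))^4). -/
open Real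
open Real Finset Filter Topology

lemma aux_ident (z : ℂ) (n : ℕ) :
    (2 * (n:ℂ) + 1) * ((π:ℂ) * (z + 1/2) * ∏ j ∈ range n, (1 - (z + 1/2)^2 / ((j:ℂ) + 1)^2))
      = (2 * (n:ℂ) + 1 + 2*z) * ((π:ℂ) * ((1:ℂ)/2) * ∏ j ∈ range n, (1 - ((1:ℂ)/2)^2 / ((j:ℂ) + 1)^2))
        * ∏ k ∈ range n, (1 - 4 * z^2 / (2 * (k:ℂ) + 1)^2) := by
  induction n with
  | zero => simp; ring
  | succ n ih =>
    have e1 : ((n:ℂ) + 1) ≠ 0 := Nat.cast_add_one_ne_zero n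
    have e2 : (2 * (n:ℂ) + 1) ≠ 0 := by
      intro h
      have : (2 * (n:ℝ) + 1) = 0 := by exact_mod_cast congrArg Complex.re h
      nlinarith [Nat.cast_nonneg (α := ℝ) n]
    have key : (2 * (n:ℂ) + 3) * (1 - (z + 1/2)^2 / ((n:ℂ) + 1)^2) * (2 * (n:ℂ) + 1 + 2*z)
        = (2 * (n:ℂ) + 3 + 2*z) * (1 - ((1:ℂ)/2)^2 / ((n:ℂ) + 1)^2)
          * (1 - 4 * z^2 / (2 * (n:ℂ) + 1)^2) * (2 * (n:ℂ) + 1) := by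
      field_simp
      ring
    apply mul_left_cancel₀ e2
    rw [prod_range_succ, prod_range_succ, prod_range_succ]
    push_cast
    linear_combination (2 * (n:ℂ) + 3) * (1 - (z + 1/2)^2 / ((n:ℂ) + 1)^2) * ih
      + ((π:ℂ) * ((1:ℂ)/2) * (∏ j ∈ range n, (1 - ((1:ℂ)/2)^2 / ((j:ℂ) + 1)^2))
          * (∏ k ∈ range n, (1 - 4 * z^2 / (2 * (k:ℂ) + 1)^2))) * key

lemma keyC (z : ℂ) :
    Tendsto (fun n : ℕ => ∏ k ∈ range n, (1 - 4 * z^2 / (2 * (k:ℂ) + 1)^2)) atTop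
      (𝓝 (Complex.cos ((π:ℂ) * z))) := by
  have hA : Tendsto (fun n : ℕ => (π:ℂ) * (z + 1/2) * ∏ j ∈ range n, (1 - (z + 1/2)^2 / ((j:ℂ) + 1)^2))
      atTop (𝓝 (Complex.cos ((π:ℂ) * z))) := by
    have := Complex.tendsto_euler_sin_prod (z + 1/2)
    have heq : Complex.sin ((π:ℂ) * (z + 1/2)) = Complex.cos ((π:ℂ) * z) := by
      have : (π:ℂ) * (z + 1/2) = (π:ℂ) * z + (π:ℂ) / 2 := by ring
      rw [this, Complex.sin_add_pi_div_two]
    rwa [heq] at this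
  have hA0 : Tendsto (fun n : ℕ => (π:ℂ) * ((1:ℂ)/2) * ∏ j ∈ range n, (1 - ((1:ℂ)/2)^2 / ((j:ℂ) + 1)^2))
      atTop (𝓝 1) := by
    have := Complex.tendsto_euler_sin_prod ((1:ℂ)/2)
    have heq : Complex.sin ((π:ℂ) * ((1:ℂ)/2)) = 1 := by
      rw [mul_one_div, Complex.sin_pi_div_two]
    rwa [heq] at this
  -- A0 n ≠ 0
  have hA0ne : ∀ n : ℕ, (π:ℂ) * ((1:ℂ)/2) * ∏ j ∈ range n, (1 - ((1:ℂ)/2)^2 / ((j:ℂ) + 1)^2) ≠ 0 := by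
    intro n
    apply mul_ne_zero
    · apply mul_ne_zero
      · exact Complex.ofReal_ne_zero.mpr pi_ne_zero
      · norm_num
    · apply Finset.prod_ne_zero_iff.mpr
      intro j _
      have : (1 - ((1:ℂ)/2)^2 / ((j:ℂ) + 1)^2) = ((1 - ((1:ℝ)/2)^2 / ((j:ℝ) + 1)^2 : ℝ) : ℂ) := by
        push_cast; ring
      rw [this, Ne, Complex.ofReal_eq_zero]
      have hj : (1:ℝ) ≤ ((j:ℝ) + 1)^2 := by nlinarith [Nat.cast_nonneg (α := ℝ) j]
      have : ((1:ℝ)/2)^2 / ((j:ℝ) + 1)^2 ≤ 1/4 := by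
        rw [div_le_iff₀ (by positivity)]; nlinarith
      intro h; nlinarith [div_nonneg (by positivity : (0:ℝ) ≤ ((1:ℝ)/2)^2) (by positivity : (0:ℝ) ≤ ((j:ℝ)+1)^2)]
  -- (2n+1)⁻¹ → 0 in ℂ
  have hinv : Tendsto (fun n : ℕ => (2 * (n:ℂ) + 1)⁻¹) atTop (𝓝 0) := by
    have hr : Tendsto (fun n : ℕ => (2 * (n:ℝ) + 1)) atTop atTop := by
      apply tendsto_atTop_add_const_right
      exact (tendsto_natCast_atTop_atTop).const_mul_atTop two_pos
    have h2 := (Complex.continuous_ofReal.tendsto 0).comp hr.inv_tendsto_atTop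
    rw [Complex.ofReal_zero] at h2
    refine h2.congr fun n => ?_
    simp only [Function.comp_apply, Pi.inv_apply]
    push_cast
    ring_nf
  -- (2n+1+2z)/(2n+1) → 1
  have hfrac : Tendsto (fun n : ℕ => (2 * (n:ℂ) + 1 + 2*z) / (2 * (n:ℂ) + 1)) atTop (𝓝 1) := by
    have e2 : ∀ n : ℕ, (2 * (n:ℂ) + 1) ≠ 0 := by
      intro n h
      have : (2 * (n:ℝ) + 1) = 0 := by exact_mod_cast congrArg Complex.re h
      nlinarith [Nat.cast_nonneg (α := ℝ) n]
    have heq : ∀ n : ℕ, (2 * (n:ℂ) + 1 + 2*z) / (2 * (n:ℂ) + 1)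
        = 1 + 2*z * (2 * (n:ℂ) + 1)⁻¹ := by
      intro n
      have h3 := e2 n
      field_simp
    have h4 : Tendsto (fun n : ℕ => 1 + 2*z * (2 * (n:ℂ) + 1)⁻¹) atTop (𝓝 (1 + 2*z*0)) :=
      tendsto_const_nhds.add (hinv.const_mul (2*z))
    rw [show (1:ℂ) + 2*z*0 = 1 by ring] at h4
    exact Tendsto.congr (fun n => (heq n).symm) h4
  have hfrac' : Tendsto (fun n : ℕ => (2 * (n:ℂ) + 1) / (2 * (n:ℂ) + 1 + 2*z)) atTop (𝓝 1) := by
    have := hfrac.inv₀ one_ne_zero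
    simpa [inv_div] using this
  -- eventually 2n+1+2z ≠ 0
  have hev : ∀ᶠ n : ℕ in atTop, (2 * (n:ℂ) + 1 + 2*z) ≠ 0 := by
    filter_upwards [eventually_ge_atTop ⌈|z.re|⌉₊] with n hn
    intro h
    have hre : 2 * (n:ℝ) + 1 + 2*z.re = 0 := by
      have := congrArg Complex.re h
      simpa using this
    have h1 : |z.re| ≤ (⌈|z.re|⌉₊ : ℝ) := Nat.le_ceil _
    have h2 : ((⌈|z.re|⌉₊ : ℕ) : ℝ) ≤ (n : ℝ) := by exact_mod_cast hn
    have := abs_le.mp (h1.trans h2)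
    linarith [this.1]
  -- combine
  have hmain : Tendsto (fun n : ℕ => ((2 * (n:ℂ) + 1) / (2 * (n:ℂ) + 1 + 2*z)) *
      (((π:ℂ) * (z + 1/2) * ∏ j ∈ range n, (1 - (z + 1/2)^2 / ((j:ℂ) + 1)^2)) /
        ((π:ℂ) * ((1:ℂ)/2) * ∏ j ∈ range n, (1 - ((1:ℂ)/2)^2 / ((j:ℂ) + 1)^2)))) atTop
      (𝓝 (Complex.cos ((π:ℂ) * z))) := by
    have := hfrac'.mul (hA.div hA0 one_ne_zero)
    simpa using this
  apply hmain.congr'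
  filter_upwards [hev] with n hn
  have hid := aux_ident z n
  rw [div_mul_div_comm, div_eq_iff (mul_ne_zero hn (hA0ne n))]
  linear_combination hid

lemma keyR (x : ℝ) :
    Tendsto (fun n : ℕ => ∏ k ∈ range n, (1 - (2 * x / ((2 * (k:ℝ) + 1) * π)) ^ 4)) atTop
      (𝓝 (Real.cosh x * Real.cos x)) := by
  have h1 := keyC ((x:ℂ) / (π:ℂ))
  have h2 := keyC (((x:ℂ) / (π:ℂ)) * Complex.I)
  have hpi : ((π:ℝ):ℂ) ≠ 0 := Complex.ofReal_ne_zero.mpr pi_ne_zero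
  rw [show (π:ℂ) * ((x:ℂ) / (π:ℂ)) = (x:ℂ) by field_simp] at h1
  rw [show (π:ℂ) * (((x:ℂ) / (π:ℂ)) * Complex.I) = (x:ℂ) * Complex.I by field_simp] at h2
  rw [Complex.cos_mul_I] at h2
  have hm := h2.mul h1
  rw [← Complex.ofReal_cos, ← Complex.ofReal_cosh, ← Complex.ofReal_mul] at hm
  have hcast : ∀ n : ℕ, ((∏ k ∈ range n, (1 - (2 * x / ((2 * (k:ℝ) + 1) * π)) ^ 4) : ℝ) : ℂ)
      = (∏ k ∈ range n, (1 - 4 * ((x:ℂ)/(π:ℂ)*Complex.I)^2 / (2 * (k:ℂ) + 1)^2)) *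
        (∏ k ∈ range n, (1 - 4 * ((x:ℂ)/(π:ℂ))^2 / (2 * (k:ℂ) + 1)^2)) := by
    intro n
    rw [Complex.ofReal_prod, ← Finset.prod_mul_distrib]
    apply Finset.prod_congr rfl
    intro k _
    have hk : (2 * (k:ℂ) + 1) ≠ 0 := by
      intro h
      have : (2 * (k:ℝ) + 1) = 0 := by exact_mod_cast congrArg Complex.re h
      nlinarith [Nat.cast_nonneg (α := ℝ) k]
    have hI : Complex.I^2 = -1 := Complex.I_sq
    push_cast
    field_simp
    ring_nf
    rw [hI]
    ring
  have : Tendsto (fun n : ℕ => ((∏ k ∈ range n, (1 - (2 * x / ((2 * (k:ℝ) + 1) * π)) ^ 4) : ℝ) : ℂ))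
      atTop (𝓝 ((Real.cosh x * Real.cos x : ℝ) : ℂ)) := by
    exact hm.congr fun n => (hcast n).symm
  have hre := (Complex.continuous_re.tendsto _).comp this
  simpa only [Function.comp_def, Complex.ofReal_re] using hre

lemma habound (x : ℝ) (k : ℕ) (hk : ⌈2 * |x|⌉₊ ≤ k) :
    (2 * x / ((2 * (k:ℝ) + 1) * π)) ^ 4 ≤ 1/2 := by
  have h1 : 2*|x| ≤ ((⌈2 * |x|⌉₊ : ℕ):ℝ) := Nat.le_ceil _
  have h2 : ((⌈2 * |x|⌉₊ : ℕ):ℝ) ≤ (k:ℝ) := by exact_mod_cast hk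
  have hden : (0:ℝ) < (2*(k:ℝ)+1)*π := by positivity
  have h3 : |2 * x / ((2*(k:ℝ)+1)*π)| ≤ 1/2 := by
    rw [abs_div, div_le_iff₀ (by rwa [abs_of_pos hden])]
    have hax : |2*x| = 2*|x| := by rw [abs_mul, abs_two]
    rw [hax, abs_of_pos hden]
    nlinarith [abs_nonneg x, pi_gt_three, Nat.cast_nonneg (α := ℝ) k]
  calc (2 * x / ((2 * (k:ℝ) + 1) * π)) ^ 4 ≤ |(2 * x / ((2 * (k:ℝ) + 1) * π)) ^ 4| := le_abs_self _
    _ = |2 * x / ((2 * (k:ℝ) + 1) * π)| ^ 4 := by rw [abs_pow]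
    _ ≤ (1/2) ^ 4 := pow_le_pow_left₀ (abs_nonneg _) h3 4
    _ ≤ 1/2 := by norm_num

lemma log_one_sub_abs_le {a : ℝ} (h0 : 0 ≤ a) (h1 : a ≤ 1/2) : |Real.log (1-a)| ≤ 2*a := by
  have hpos : 0 < 1 - a := by linarith
  have h4 : (1-a) * (1-a)⁻¹ = 1 := mul_inv_cancel₀ hpos.ne'
  rw [abs_le]
  constructor
  · have := Real.log_le_sub_one_of_pos (inv_pos.mpr hpos)
    rw [Real.log_inv] at this
    nlinarith [sq_nonneg a, inv_pos.mpr hpos]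
  · have := Real.log_le_sub_one_of_pos hpos
    linarith

lemma hasum (x : ℝ) :
    Summable (fun n : ℕ =>
      Real.log (1 - (2 * x / ((2 * ((n + ⌈2 * |x|⌉₊ : ℕ):ℝ) + 1) * π)) ^ 4)) := by
  have hS : Summable (fun n : ℕ => 1/((n:ℝ)+1)^2) := by
    have h0 : Summable (fun n : ℕ => 1/((n:ℝ))^2) := summable_one_div_nat_pow.mpr one_lt_two
    have := (summable_nat_add_iff 1).mpr h0
    apply this.congr
    intro n
    push_cast
    ring
  have hSb : Summable (fun n : ℕ => (2 * (2*x)^4/π^4) * (1/((n:ℝ)+1)^2)) := hS.mul_left _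
  apply Summable.of_abs
  refine Summable.of_nonneg_of_le (fun n => abs_nonneg _) (fun n => ?_) hSb
  set k : ℕ := n + ⌈2 * |x|⌉₊ with hk
  have hb := habound x k (Nat.le_add_left _ n)
  have hn0 : 0 ≤ (2 * x / ((2 * (k:ℝ) + 1) * π)) ^ 4 := by positivity
  have hlog : |Real.log (1 - (2 * x / ((2 * (k:ℝ) + 1) * π)) ^ 4)|
      ≤ 2 * (2 * x / ((2 * (k:ℝ) + 1) * π)) ^ 4 := log_one_sub_abs_le hn0 hb
  refine hlog.trans ?_
  have hk1 : ((n:ℝ)+1) ≤ 2 * (k:ℝ) + 1 := by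
    rw [hk]
    push_cast
    nlinarith [Nat.cast_nonneg (α := ℝ) n, Nat.cast_nonneg (α := ℝ) (⌈2 * |x|⌉₊)]
  have hpow : π^4 * ((n:ℝ)+1)^2 ≤ ((2 * (k:ℝ) + 1) * π)^4 := by
    have h1 : ((n:ℝ)+1)^2 ≤ ((n:ℝ)+1)^4 :=
      pow_le_pow_right₀ (by nlinarith [Nat.cast_nonneg (α := ℝ) n]) (by norm_num)
    have h2 : ((n:ℝ)+1)^4 ≤ (2 * (k:ℝ) + 1)^4 := pow_le_pow_left₀ (by positivity) hk1 4
    have h3 : (0:ℝ) < π^4 := by positivity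
    calc π^4 * ((n:ℝ)+1)^2 ≤ π^4 * (2 * (k:ℝ) + 1)^4 := by nlinarith
      _ = ((2 * (k:ℝ) + 1) * π)^4 := by ring
  calc 2 * (2 * x / ((2 * (k:ℝ) + 1) * π)) ^ 4
      = 2 * ((2*x)^4 / ((2 * (k:ℝ) + 1) * π)^4) := by rw [div_pow]
    _ ≤ 2 * ((2*x)^4 / (π^4 * ((n:ℝ)+1)^2)) := by
        gcongr
    _ = (2 * (2*x)^4/π^4) * (1/((n:ℝ)+1)^2) := by
        have : π ≠ 0 := pi_ne_zero
        field_simp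

lemma assemble (f : ℕ → ℝ) (L : ℝ) (N : ℕ)
    (hlim : Tendsto (fun n : ℕ => ∏ i ∈ range n, f i) atTop (𝓝 L))
    (hg : HasProd (fun n : ℕ => f (n + N)) (∏' n : ℕ, f (n + N))) :
    L = ∏' i : ℕ, f i := by
  have hmul : Multipliable fun n : ℕ => f (n + N) := ⟨_, hg⟩
  have htp := Multipliable.prod_mul_tprod_nat_mul' (f := f) (k := N) hmul
  have htail := hg.tendsto_prod_nat
  have h2 : Tendsto (fun n : ℕ => ∏ i ∈ range (N + n), f i) atTop
      (𝓝 ((∏ i ∈ range N, f i) * ∏' i : ℕ, f (i + N))) := by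
    have hc := (tendsto_const_nhds (x := ∏ i ∈ range N, f i) (f := atTop)).mul htail
    refine hc.congr fun n => ?_
    rw [prod_range_add]
    congr 1
    exact Finset.prod_congr rfl fun i _ => by rw [add_comm]
  have h3 : Tendsto (fun n : ℕ => ∏ i ∈ range (N + n), f i) atTop (𝓝 L) := by
    refine (hlim.comp (tendsto_add_atTop_nat N)).congr fun n => ?_
    simp [add_comm]
  rw [← htp]
  exact tendsto_nhds_unique h3 h2

theorem stmt_8 (x : ℝ) :
    Real.cosh x * Real.cos x =
      ∏' k : ℕ, (1 - (2 * x / ((2 * (k : ℝ) + 1) * π)) ^ 4) := by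
  have hpos : ∀ n : ℕ,
      (0:ℝ) < 1 - (2 * x / ((2 * ((n + ⌈2 * |x|⌉₊ : ℕ):ℝ) + 1) * π)) ^ 4 := by
    intro n
    have := habound x (n + ⌈2 * |x|⌉₊) (Nat.le_add_left _ n)
    linarith
  have hg : HasProd
      (fun n : ℕ => 1 - (2 * x / ((2 * ((n + ⌈2 * |x|⌉₊ : ℕ):ℝ) + 1) * π)) ^ 4)
      (∏' n : ℕ, (1 - (2 * x / ((2 * ((n + ⌈2 * |x|⌉₊ : ℕ):ℝ) + 1) * π)) ^ 4)) :=
    (Real.multipliable_of_summable_log hpos (hasum x)).hasProd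
  exact assemble (fun k : ℕ => 1 - (2 * x / ((2 * (k:ℝ) + 1) * π)) ^ 4)
    (Real.cosh x * Real.cos x) ⌈2 * |x|⌉₊ (keyR x) hg
end

section
/- For every positive integer n and real x with |x| < π/2, (1/2^{2n-1}) · (1/(2n-2)!) · d^{2n-2}/dx^{2n-2} (tan x) = ∑_{k≥0} (1/((2k+1)π - 2x)^{2n-1} - 1/((2k+1)π + 2x)^{2n-1}). -/
open Real Filter Finset Topology

noncomputable section TanSeries

namespace TanSeriesAux

/-- bound on norm of product of (1+a j) -/
lemma norm_prod_le_exp (a : ℕ → ℂ) (u : ℕ → ℝ) (h : ∀ j, ‖a j‖ ≤ u j) (s : Finset ℕ) :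
    ‖∏ j ∈ s, (1 + a j)‖ ≤ Real.exp (∑ j ∈ s, u j) := by
  have hu : ∀ j, 0 ≤ u j := fun j => le_trans (norm_nonneg _) (h j)
  calc ‖∏ j ∈ s, (1 + a j)‖ ≤ ∏ j ∈ s, ‖(1 + a j)‖ := norm_prod_le _ _
    _ ≤ ∏ j ∈ s, (1 + u j) := by
        apply Finset.prod_le_prod (fun j _ => norm_nonneg _)
        intro j _
        calc ‖(1:ℂ) + a j‖ ≤ ‖(1:ℂ)‖ + ‖a j‖ := norm_add_le _ _
          _ ≤ 1 + u j := by simpa using h j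
    _ ≤ ∏ j ∈ s, Real.exp (u j) := by
        apply Finset.prod_le_prod (fun j _ => by nlinarith [hu j])
        intro j _
        simpa [add_comm] using Real.add_one_le_exp (u j)
    _ = Real.exp (∑ j ∈ s, u j) := (Real.exp_sum s u).symm

lemma norm_prod_sub_one_le (a : ℕ → ℂ) (u : ℕ → ℝ) (h : ∀ j, ‖a j‖ ≤ u j) (s : Finset ℕ) :
    ‖∏ j ∈ s, (1 + a j) - 1‖ ≤ Real.exp (∑ j ∈ s, u j) - 1 := by
  have hu : ∀ j, 0 ≤ u j := fun j => le_trans (norm_nonneg _) (h j)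
  induction s using Finset.induction_on with
  | empty => simp
  | @insert i s hi ih =>
    rw [Finset.prod_insert hi, Finset.sum_insert hi]
    have key : (1 + a i) * ∏ j ∈ s, (1 + a j) - 1
        = (∏ j ∈ s, (1 + a j) - 1) * (1 + a i) + a i := by ring
    rw [key]
    have h1 : ‖(∏ j ∈ s, (1 + a j) - 1) * (1 + a i) + a i‖
        ≤ ‖∏ j ∈ s, (1 + a j) - 1‖ * ‖(1:ℂ) + a i‖ + ‖a i‖ := by
      refine (norm_add_le _ _).trans ?_
      rw [norm_mul]
    have h2 : ‖(1:ℂ) + a i‖ ≤ Real.exp (u i) := by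
      calc ‖(1:ℂ) + a i‖ ≤ 1 + u i := by
            refine (norm_add_le _ _).trans ?_; simpa using h i
        _ ≤ Real.exp (u i) := by simpa [add_comm] using Real.add_one_le_exp (u i)
    have h3 : ‖a i‖ ≤ Real.exp (u i) - 1 := by
      have := Real.add_one_le_exp (u i)
      have := h i
      linarith
    have h4 : 0 ≤ Real.exp (∑ j ∈ s, u j) - 1 := by
      have : (1:ℝ) ≤ Real.exp (∑ j ∈ s, u j) := by
        rw [← Real.exp_zero]
        exact Real.exp_le_exp.2 (Finset.sum_nonneg fun j _ => hu j)
      linarith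
    calc ‖(∏ j ∈ s, (1 + a j) - 1) * (1 + a i) + a i‖
        ≤ ‖∏ j ∈ s, (1 + a j) - 1‖ * ‖(1:ℂ) + a i‖ + ‖a i‖ := h1
      _ ≤ (Real.exp (∑ j ∈ s, u j) - 1) * Real.exp (u i) + (Real.exp (u i) - 1) := by
          have := ih
          gcongr
      _ = Real.exp (∑ j ∈ s, u j) * Real.exp (u i) - 1 := by ring
      _ = Real.exp (u i + ∑ j ∈ s, u j) - 1 := by rw [← Real.exp_add]; ring_nf


def P (N : ℕ) (z : ℂ) : ℂ := ↑π * z * ∏ j ∈ Finset.range N, (1 - z^2/((j:ℂ)+1)^2)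

def u (j : ℕ) : ℝ := 4/((j:ℝ)+1)^2

lemma u_nonneg (j : ℕ) : 0 ≤ u j := by unfold u; positivity

lemma summable_u : Summable u := by
  have h : Summable (fun j : ℕ => ((j:ℝ)+1)^(-(2:ℝ))) := by
    have := Real.summable_one_div_nat_rpow.mpr (by norm_num : (1:ℝ) < 2)
    have h2 := (summable_nat_add_iff (f := fun n : ℕ => 1 / (n:ℝ) ^ (2:ℝ)) 1).mpr this
    apply h2.congr
    intro n
    rw [Real.rpow_neg (by positivity)]
    push_cast
    rw [one_div]
  have h4 := h.mul_left 4
  apply h4.congr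
  intro j
  unfold u
  rw [Real.rpow_neg (by positivity), Real.rpow_two]
  ring

lemma norm_a_le {z : ℂ} (hz : z ∈ Metric.ball (0:ℂ) 2) (j : ℕ) :
    ‖-(z^2) / ((j:ℂ)+1)^2‖ ≤ u j := by
  have hz2 : ‖z‖ < 2 := by simpa [Complex.dist_eq] using hz
  have : ((j:ℂ)+1)^2 = (((((j:ℝ)+1))^2 : ℝ) : ℂ) := by push_cast; ring
  rw [norm_div, norm_neg, norm_pow, this, Complex.norm_real, Real.norm_of_nonneg (by positivity)]
  unfold u
  have h1 : ‖z‖^2 ≤ 4 := by nlinarith [norm_nonneg z]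
  have h2 : (0:ℝ) < ((j:ℝ)+1)^2 := by positivity
  rw [div_le_div_iff₀ h2 h2]
  nlinarith

lemma key_estimate {N M : ℕ} (hNM : N ≤ M) {z : ℂ} (hz : z ∈ Metric.ball (0:ℂ) 2) :
    ‖P M z - P N z‖ ≤ 2 * π * Real.exp (∑' j, u j) *
      (Real.exp ((∑' j, u j) - ∑ j ∈ Finset.range N, u j) - 1) := by
  have hz2 : ‖z‖ < 2 := by simpa [Complex.dist_eq] using hz
  set a : ℕ → ℂ := fun j => -(z^2) / ((j:ℂ)+1)^2 with ha
  have hfac : ∀ j : ℕ, (1 : ℂ) - z^2/((j:ℂ)+1)^2 = 1 + a j := by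
    intro j; rw [ha]; ring
  have hau : ∀ j, ‖a j‖ ≤ u j := fun j => norm_a_le hz j
  have hsplit : P M z - P N z
      = ↑π * z * (∏ j ∈ Finset.range N, (1 + a j)) * (∏ j ∈ Finset.Ico N M, (1 + a j) - 1) := by
    unfold P
    simp_rw [hfac]
    rw [Finset.range_eq_Ico, ← Finset.prod_Ico_consecutive _ (Nat.zero_le N) hNM,
      ← Finset.range_eq_Ico]
    ring
  rw [hsplit]
  rw [norm_mul, norm_mul, norm_mul, Complex.norm_real,
    Real.norm_of_nonneg Real.pi_pos.le]
  have b1 : ‖∏ j ∈ Finset.range N, (1 + a j)‖ ≤ Real.exp (∑ j ∈ Finset.range N, u j) :=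
    norm_prod_le_exp a u hau _
  have b2 : ‖∏ j ∈ Finset.Ico N M, (1 + a j) - 1‖ ≤ Real.exp (∑ j ∈ Finset.Ico N M, u j) - 1 :=
    norm_prod_sub_one_le a u hau _
  have b3 : ∑ j ∈ Finset.Ico N M, u j ≤ (∑' j, u j) - ∑ j ∈ Finset.range N, u j := by
    have : ∑ j ∈ Finset.range N, u j + ∑ j ∈ Finset.Ico N M, u j
        = ∑ j ∈ Finset.range M, u j := by
      rw [Finset.range_eq_Ico, Finset.range_eq_Ico]
      exact Finset.sum_Ico_consecutive u (Nat.zero_le N) hNM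
    have hle : ∑ j ∈ Finset.range M, u j ≤ ∑' j, u j :=
      Summable.sum_le_tsum _ (fun j _ => u_nonneg j) summable_u
    linarith
  have b4 : ‖∏ j ∈ Finset.Ico N M, (1 + a j) - 1‖
      ≤ Real.exp ((∑' j, u j) - ∑ j ∈ Finset.range N, u j) - 1 := by
    refine b2.trans ?_
    have := Real.exp_le_exp.2 b3
    linarith
  have b5 : ‖∏ j ∈ Finset.range N, (1 + a j)‖ ≤ Real.exp (∑' j, u j) := by
    refine b1.trans (Real.exp_le_exp.2 ?_)
    exact Summable.sum_le_tsum _ (fun j _ => u_nonneg j) summable_u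
  have h0 : (0:ℝ) ≤ Real.exp ((∑' j, u j) - ∑ j ∈ Finset.range N, u j) - 1 := by
    have : (1:ℝ) ≤ Real.exp ((∑' j, u j) - ∑ j ∈ Finset.range N, u j) := by
      rw [← Real.exp_zero]
      apply Real.exp_le_exp.2
      have := Summable.sum_le_tsum (Finset.range N) (fun j _ => u_nonneg j) summable_u
      linarith
    linarith
  calc π * ‖z‖ * ‖∏ j ∈ Finset.range N, (1 + a j)‖ * ‖∏ j ∈ Finset.Ico N M, (1 + a j) - 1‖
      ≤ π * 2 * Real.exp (∑' j, u j) *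
        (Real.exp ((∑' j, u j) - ∑ j ∈ Finset.range N, u j) - 1) := by
        gcongr
    _ = 2 * π * Real.exp (∑' j, u j) *
        (Real.exp ((∑' j, u j) - ∑ j ∈ Finset.range N, u j) - 1) := by ring

lemma uniformCauchy_P : UniformCauchySeqOn P atTop (Metric.ball (0:ℂ) 2) := by
  rw [Metric.uniformCauchySeqOn_iff]
  intro ε hε
  set S := ∑' j, u j with hS
  have htend : Tendsto (fun N => 2 * π * Real.exp S *
      (Real.exp (S - ∑ j ∈ Finset.range N, u j) - 1)) atTop (𝓝 0) := by
    have h1 : Tendsto (fun N => S - ∑ j ∈ Finset.range N, u j) atTop (𝓝 0) := by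
      have := summable_u.hasSum.tendsto_sum_nat
      have h2 := (tendsto_const_nhds (x := S) (f := atTop (α := ℕ))).sub this
      simpa [hS] using h2
    have h2 : Tendsto (fun N => Real.exp (S - ∑ j ∈ Finset.range N, u j) - 1) atTop (𝓝 0) := by
      have := (Real.continuous_exp.tendsto 0).comp h1
      simp only [Real.exp_zero] at this
      have h3 := this.sub (tendsto_const_nhds (x := (1:ℝ)))
      simpa using h3
    have := h2.const_mul (2 * π * Real.exp S)
    simpa [mul_comm] using this
  have hev : ∀ᶠ N in atTop, 2 * π * Real.exp S *
      (Real.exp (S - ∑ j ∈ Finset.range N, u j) - 1) < ε :=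
    htend.eventually (eventually_lt_nhds hε) |>.mono (fun N h => by simpa using h)
  obtain ⟨N₀, hN₀⟩ := hev.exists_forall_of_atTop
  refine ⟨N₀, fun m hm n hn z hz => ?_⟩
  have mono : ∀ {p q : ℕ}, p ≤ q → S - ∑ j ∈ Finset.range q, u j ≤ S - ∑ j ∈ Finset.range p, u j := by
    intro p q hpq
    have : ∑ j ∈ Finset.range p, u j ≤ ∑ j ∈ Finset.range q, u j :=
      Finset.sum_le_sum_of_subset_of_nonneg (Finset.range_subset_range.2 hpq)
        (fun j _ _ => u_nonneg j)
    linarith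
  have bound : ∀ {p q : ℕ}, N₀ ≤ p → p ≤ q → dist (P q z) (P p z) < ε := by
    intro p q hp hpq
    rw [dist_eq_norm]
    calc ‖P q z - P p z‖ ≤ 2 * π * Real.exp S *
        (Real.exp (S - ∑ j ∈ Finset.range p, u j) - 1) := key_estimate hpq hz
      _ ≤ 2 * π * Real.exp S *
        (Real.exp (S - ∑ j ∈ Finset.range N₀, u j) - 1) := by
          exact mul_le_mul_of_nonneg_left
            (sub_le_sub_right (Real.exp_le_exp.2 (mono hp)) 1) (by positivity)
      _ < ε := hN₀ N₀ le_rfl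
  rcases le_total m n with h | h
  · rw [dist_comm]; exact bound hm h
  · exact bound hn h

lemma tendstoUniformly_P :
    TendstoUniformlyOn P (fun z => Complex.sin (↑π * z)) atTop (Metric.ball (0:ℂ) 2) :=
  uniformCauchy_P.tendstoUniformlyOn_of_tendsto
    (fun z _ => Complex.tendsto_euler_sin_prod z)


lemma factor_ne_zero {t : ℝ} (ht0 : 0 < t) (ht1 : t < 1) (j : ℕ) :
    (1 : ℂ) - ((t:ℂ))^2/((j:ℂ)+1)^2 ≠ 0 := by
  have h : (1 : ℂ) - ((t:ℂ))^2/((j:ℂ)+1)^2 = ((1 - t^2/((j:ℝ)+1)^2 : ℝ) : ℂ) := by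
    push_cast; ring
  rw [h]
  rw [Ne, Complex.ofReal_eq_zero]
  have h1 : t^2 < 1 := by nlinarith
  have h2 : (1:ℝ) ≤ ((j:ℝ)+1)^2 := by nlinarith [Nat.cast_nonneg (α := ℝ) j]
  have h3 : t^2/((j:ℝ)+1)^2 < 1 := by
    rw [div_lt_one (by positivity)]
    linarith
  intro hcon
  have : t^2/((j:ℝ)+1)^2 = 1 := by linarith
  linarith

lemma differentiable_P (N : ℕ) : Differentiable ℂ (P N) := by
  unfold P
  apply Differentiable.mul
  · exact (differentiable_const _).mul differentiable_id
  · apply Differentiable.fun_finsetProd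
    intro j _
    apply Differentiable.const_sub
    apply Differentiable.div_const
    exact differentiable_pow 2

lemma logDeriv_P (N : ℕ) {t : ℝ} (ht0 : 0 < t) (ht1 : t < 1) :
    logDeriv (P N) (t:ℂ) = 1/(t:ℂ) +
      ∑ j ∈ Finset.range N, 2*(t:ℂ)/((t:ℂ)^2 - ((j:ℂ)+1)^2) := by
  have htne : (t:ℂ) ≠ 0 := by
    simpa [Complex.ofReal_eq_zero] using ht0.ne'
  have hπ : (π:ℂ) ≠ 0 := by
    simpa [Complex.ofReal_eq_zero] using Real.pi_ne_zero
  have hprod_ne : ∏ j ∈ Finset.range N, ((1:ℂ) - ((t:ℂ))^2/((j:ℂ)+1)^2) ≠ 0 :=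
    Finset.prod_ne_zero_iff.2 (fun j _ => factor_ne_zero ht0 ht1 j)
  have hsplit : P N = fun z => ((π:ℂ) * z) * ∏ j ∈ Finset.range N, (1 - z^2/((j:ℂ)+1)^2) := rfl
  rw [hsplit, logDeriv_mul]
  · congr 1
    · show logDeriv (fun z : ℂ => (π:ℂ) * id z) (t:ℂ) = 1/(t:ℂ)
      rw [logDeriv_const_mul _ _ hπ]
      simp
    · rw [logDeriv_prod]
      · apply Finset.sum_congr rfl
        intro j _
        have c_ne : ((j:ℂ)+1)^2 ≠ 0 := by
          intro hcon
          have : ((j:ℂ)+1) = 0 := by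
            exact pow_eq_zero_iff (by norm_num) |>.mp hcon
          have : ((j:ℝ)+1 : ℝ) = 0 := by
            have := congrArg Complex.re this
            simpa using this
          nlinarith [Nat.cast_nonneg (α := ℝ) j]
        have hd : HasDerivAt (fun z : ℂ => 1 - z^2/((j:ℂ)+1)^2)
            (-(2*(t:ℂ)/((j:ℂ)+1)^2)) (t:ℂ) := by
          have h1 : HasDerivAt (fun z : ℂ => z^2) (2*(t:ℂ)) (t:ℂ) := by
            simpa using hasDerivAt_pow 2 (t:ℂ)
          have h2 := (h1.div_const (((j:ℂ)+1)^2)).const_sub 1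
          simpa using h2
        rw [logDeriv_apply, hd.deriv]
        have hfactor := factor_ne_zero ht0 ht1 j
        have hden : (t:ℂ)^2 - ((j:ℂ)+1)^2 ≠ 0 := by
          intro hcon
          apply hfactor
          field_simp
          linear_combination -hcon
        rw [div_eq_div_iff hfactor hden]
        field_simp
        ring
      · exact fun j _ => factor_ne_zero ht0 ht1 j
      · intro j _
        apply DifferentiableAt.const_sub
        apply DifferentiableAt.div_const
        exact differentiableAt_pow 2
  · exact mul_ne_zero hπ htne
  · exact hprod_ne
  · exact (differentiableAt_const _).mul differentiableAt_id
  · apply DifferentiableAt.fun_finsetProd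
    intro j _
    apply DifferentiableAt.const_sub
    apply DifferentiableAt.div_const
    exact differentiableAt_pow 2

lemma sin_pi_t_ne {t : ℝ} (ht0 : 0 < t) (ht1 : t < 1) : Real.sin (π * t) ≠ 0 := by
  have := Real.sin_pos_of_pos_of_lt_pi (x := π * t) (by positivity)
    (by nlinarith [Real.pi_pos])
  exact this.ne'

lemma logDeriv_sin_pi {t : ℝ} (ht0 : 0 < t) (ht1 : t < 1) :
    logDeriv (fun z => Complex.sin ((π:ℂ) * z)) (t:ℂ)
      = ((π * Real.cos (π*t) / Real.sin (π*t) : ℝ) : ℂ) := by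
  have hd : HasDerivAt (fun z : ℂ => Complex.sin ((π:ℂ) * z))
      (Complex.cos ((π:ℂ)*(t:ℂ)) * (π:ℂ)) (t:ℂ) := by
    have h1 : HasDerivAt (fun z : ℂ => (π:ℂ) * z) ((π:ℂ)) (t:ℂ) := by
      simpa using (hasDerivAt_id ((t:ℂ))).const_mul ((π:ℂ))
    exact (Complex.hasDerivAt_sin ((π:ℂ)*(t:ℂ))).comp (t:ℂ) h1
  rw [logDeriv_apply, hd.deriv]
  have h2 : ((π:ℂ)*(t:ℂ)) = (((π*t : ℝ)) : ℂ) := by push_cast; ring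
  rw [h2, ← Complex.ofReal_sin, ← Complex.ofReal_cos]
  push_cast
  ring

lemma tendsto_partial_sums {t : ℝ} (ht0 : 0 < t) (ht1 : t < 1) :
    Tendsto (fun N => ∑ j ∈ Finset.range N, 2*t/(t^2 - ((j:ℝ)+1)^2)) atTop
      (𝓝 (π * Real.cos (π*t) / Real.sin (π*t) - 1/t)) := by
  have hmem : (t:ℂ) ∈ Metric.ball (0:ℂ) 2 := by
    simp only [Metric.mem_ball, Complex.dist_eq, sub_zero]
    rw [Complex.norm_real, Real.norm_of_nonneg ht0.le]
    linarith
  have hsinne : Complex.sin ((π:ℂ) * (t:ℂ)) ≠ 0 := by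
    have h2 : ((π:ℂ)*(t:ℂ)) = (((π*t : ℝ)) : ℂ) := by push_cast; ring
    rw [h2, ← Complex.ofReal_sin, Ne, Complex.ofReal_eq_zero]
    exact sin_pi_t_ne ht0 ht1
  have hld := Complex.logDeriv_tendsto (f := P) (g := fun z => Complex.sin ((π:ℂ) * z))
    Metric.isOpen_ball hmem
    (tendstoUniformly_P.tendstoLocallyUniformlyOn)
    (Eventually.of_forall (fun N => (differentiable_P N).differentiableOn))
    hsinne
  have hldP : ∀ N : ℕ, logDeriv (P N) (t:ℂ) = 1/(t:ℂ) +
      ∑ j ∈ Finset.range N, 2*(t:ℂ)/((t:ℂ)^2 - ((j:ℂ)+1)^2) := fun N => logDeriv_P N ht0 ht1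
  rw [logDeriv_sin_pi ht0 ht1] at hld
  simp only [hldP] at hld
  -- now transfer to ℝ
  have hre := (Complex.continuous_re.tendsto _).comp hld
  have heq : (fun N => ((1/(t:ℂ) + ∑ j ∈ Finset.range N, 2*(t:ℂ)/((t:ℂ)^2 - ((j:ℂ)+1)^2)).re))
      = fun N => 1/t + ∑ j ∈ Finset.range N, 2*t/(t^2 - ((j:ℝ)+1)^2) := by
    funext N
    have : (1/(t:ℂ) + ∑ j ∈ Finset.range N, 2*(t:ℂ)/((t:ℂ)^2 - ((j:ℂ)+1)^2))
        = (((1/t + ∑ j ∈ Finset.range N, 2*t/(t^2 - ((j:ℝ)+1)^2) : ℝ)) : ℂ) := by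
      push_cast
      ring
    rw [this, Complex.ofReal_re]
  rw [Function.comp_def] at hre
  simp only [heq] at hre
  rw [Complex.ofReal_re] at hre
  have := hre.sub (tendsto_const_nhds (x := 1/t))
  simp only [add_sub_cancel_left] at this
  exact this


lemma summable_one_div_sq : Summable (fun k : ℕ => 1/((k:ℝ)+1)^2) := by
  have := summable_u
  apply (this.div_const 4).congr
  intro k
  unfold u
  ring

lemma base_hasSum (x : ℝ) (hx : |x| < π/2) :
    HasSum (fun k : ℕ => 1/((2*(k:ℝ)+1)*π - 2*x) - 1/((2*(k:ℝ)+1)*π + 2*x))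
      (Real.tan x / 2) := by
  have hπ := Real.pi_pos
  have habs := abs_lt.mp hx
  set p : ℕ → ℝ := fun k => 2/((2*(k:ℝ)+1)*π - 2*x) with hp
  set q : ℕ → ℝ := fun k => 2/((2*(k:ℝ)+1)*π + 2*x) with hq
  have hB : 0 < π - 2*|x| := by
    have := abs_nonneg x
    cases abs_lt.mp hx; linarith [abs_lt.mp hx]
  have hD1 : ∀ k : ℕ, ((k:ℝ)+1)*(π-2*|x|) ≤ (2*(k:ℝ)+1)*π - 2*x := by
    intro k
    have hk : (0:ℝ) ≤ (k:ℝ) := Nat.cast_nonneg k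
    have h1 : x ≤ |x| := le_abs_self x
    nlinarith
  have hD2 : ∀ k : ℕ, ((k:ℝ)+1)*(π-2*|x|) ≤ (2*(k:ℝ)+1)*π + 2*x := by
    intro k
    have hk : (0:ℝ) ≤ (k:ℝ) := Nat.cast_nonneg k
    have h1 : -x ≤ |x| := neg_le_abs x
    nlinarith
  have hD1pos : ∀ k : ℕ, (0:ℝ) < (2*(k:ℝ)+1)*π - 2*x := by
    intro k
    have hk : (0:ℝ) ≤ (k:ℝ) := Nat.cast_nonneg k
    calc (0:ℝ) < ((k:ℝ)+1)*(π-2*|x|) := by positivity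
      _ ≤ _ := hD1 k
  have hD2pos : ∀ k : ℕ, (0:ℝ) < (2*(k:ℝ)+1)*π + 2*x := by
    intro k
    have hk : (0:ℝ) ≤ (k:ℝ) := Nat.cast_nonneg k
    calc (0:ℝ) < ((k:ℝ)+1)*(π-2*|x|) := by positivity
      _ ≤ _ := hD2 k
  -- summability of p - q
  have hsum : Summable (fun k : ℕ => p k - q k) := by
    have hg : Summable (fun k : ℕ => (8*|x|+1) / (((k:ℝ)+1)^2 * (π-2*|x|)^2)) := by
      apply ((summable_one_div_sq.mul_left ((8*|x|+1) / (π-2*|x|)^2))).congr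
      intro k
      rw [div_mul_div_comm]
      ring
    refine Summable.of_norm_bounded hg ?_
    intro k
    have h1 := hD1pos k
    have h2 := hD2pos k
    have hpq : p k - q k = 8*x / (((2*(k:ℝ)+1)*π - 2*x) * ((2*(k:ℝ)+1)*π + 2*x)) := by
      rw [hp, hq]
      field_simp
      ring
    rw [hpq, Real.norm_eq_abs, abs_div]
    rw [abs_of_pos (by positivity : (0:ℝ) < ((2*(k:ℝ)+1)*π - 2*x) * ((2*(k:ℝ)+1)*π + 2*x))]
    have hkk : (0:ℝ) < ((k:ℝ)+1)^2 * (π-2*|x|)^2 := by positivity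
    have hprod : ((k:ℝ)+1)^2 * (π-2*|x|)^2
        ≤ ((2*(k:ℝ)+1)*π - 2*x) * ((2*(k:ℝ)+1)*π + 2*x) := by
      have := hD1 k; have := hD2 k
      have h3 : (0:ℝ) ≤ ((k:ℝ)+1)*(π-2*|x|) := by positivity
      calc ((k:ℝ)+1)^2 * (π-2*|x|)^2 = (((k:ℝ)+1)*(π-2*|x|)) * (((k:ℝ)+1)*(π-2*|x|)) := by ring
        _ ≤ _ := by apply mul_le_mul (hD1 k) (hD2 k) h3 h1.le
    have habs8 : |8*x| ≤ 8*|x| + 1 := by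
      rw [abs_mul, abs_of_nonneg (by norm_num : (0:ℝ) ≤ 8)]
      linarith [abs_nonneg x]
    exact div_le_div₀ (by positivity) habs8 hkk hprod
  -- the cotangent series at t = 1/2 - x/π
  obtain ⟨t, ht⟩ : ∃ t : ℝ, t = 1/2 - x/π := ⟨_, rfl⟩
  have ht0 : 0 < t := by
    rw [ht]
    have : x/π < 1/2 := by
      rw [div_lt_iff₀ hπ]
      calc x ≤ |x| := le_abs_self x
        _ < π/2 := hx
        _ = 1/2*π := by ring
    linarith
  have ht1 : t < 1 := by
    rw [ht]
    have : -(1/2) < x/π := by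
      rw [lt_div_iff₀ hπ]
      calc -(1/2)*π = -(π/2) := by ring
        _ < x := habs.1
    linarith
  have htend := tendsto_partial_sums ht0 ht1
  -- rewrite limit
  have hπt : π * t = π/2 - x := by
    rw [ht]; field_simp
  have hπ2x : (0:ℝ) < π - 2*x := by nlinarith [habs.2]
  have hlim : π * Real.cos (π*t) / Real.sin (π*t) - 1/t = π * Real.tan x - π * p 0 := by
    rw [hπt, Real.cos_pi_div_two_sub, Real.sin_pi_div_two_sub, Real.tan_eq_sin_div_cos, hp]
    have hcos : Real.cos x ≠ 0 := (Real.cos_pos_of_mem_Ioo ⟨habs.1, habs.2⟩).ne'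
    have ht0' : (1/2 - x/π : ℝ) ≠ 0 := by rw [ht] at ht0; exact ht0.ne'
    rw [ht]
    push_cast
    field_simp [hcos, Real.pi_ne_zero, ht0', hπ2x.ne']
    ring
  -- rewrite terms
  have hterm : ∀ j : ℕ, 2*t/(t^2 - ((j:ℝ)+1)^2) = π * (p (j+1) - q j) := by
    intro j
    have hd1 : t^2 - ((j:ℝ)+1)^2 ≠ 0 := by
      have h2 : (1:ℝ) ≤ ((j:ℝ)+1) := by
        have : (0:ℝ) ≤ (j:ℝ) := Nat.cast_nonneg j
        linarith
      have : t^2 < ((j:ℝ)+1)^2 := by nlinarith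
      linarith
    have hpj : ((2*((j:ℕ)+1:ℕ):ℝ)+1)*π - 2*x ≠ 0 := by
      have := hD1pos (j+1); push_cast at this ⊢; linarith
    have hqj : (2*(j:ℝ)+1)*π + 2*x ≠ 0 := (hD2pos j).ne'
    have hD' : (2*((j:ℝ)+1)+1)*π - 2*x ≠ 0 := by
      have := hD1pos (j+1); push_cast at this; exact this.ne'
    rw [hp, hq]
    push_cast
    have hcomb : π * (2/((2*((j:ℝ)+1)+1)*π - 2*x) - 2/((2*(j:ℝ)+1)*π + 2*x))
        = (π * (2*((2*(j:ℝ)+1)*π + 2*x) - 2*((2*((j:ℝ)+1)+1)*π - 2*x)))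
          / (((2*((j:ℝ)+1)+1)*π - 2*x) * ((2*(j:ℝ)+1)*π + 2*x)) := by
      rw [div_sub_div _ _ hD' hqj, eq_div_iff (mul_ne_zero hD' hqj), mul_comm π,
        div_mul_eq_mul_div, div_mul_eq_mul_div, div_eq_iff (mul_ne_zero hD' hqj)]
      ring
    rw [hcomb, div_eq_div_iff hd1 (mul_ne_zero hD' hqj), ht]
    field_simp [Real.pi_ne_zero]
    ring
  -- scaled convergence
  have htend2 : Tendsto (fun N => ∑ j ∈ Finset.range N, (p (j+1) - q j)) atTop
      (𝓝 (Real.tan x - p 0)) := by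
    rw [hlim] at htend
    simp only [hterm] at htend
    have h2 := htend.const_mul (π⁻¹)
    have heqf : (fun N => π⁻¹ * ∑ j ∈ Finset.range N, π * (p (j+1) - q j))
        = fun N => ∑ j ∈ Finset.range N, (p (j+1) - q j) := by
      funext N
      rw [← Finset.mul_sum, ← mul_assoc, inv_mul_cancel₀ Real.pi_ne_zero, one_mul]
    rw [heqf] at h2
    have heql : π⁻¹ * (π * Real.tan x - π * p 0) = Real.tan x - p 0 := by
      field_simp
    rw [heql] at h2
    exact h2
  have hploc : Tendsto (fun N : ℕ => p N) atTop (𝓝 0) := by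
    have hdenom : Tendsto (fun N : ℕ => (2*(N:ℝ)+1)*π - 2*x) atTop atTop := by
      apply tendsto_atTop_add_const_right
      apply Tendsto.atTop_mul_const hπ
      apply tendsto_atTop_add_const_right
      exact (tendsto_natCast_atTop_atTop).const_mul_atTop two_pos
    rw [hp]
    exact Tendsto.div_atTop tendsto_const_nhds hdenom
  have hkey : ∀ N, ∑ k ∈ Finset.range N, (p k - q k)
      = (∑ j ∈ Finset.range N, (p (j+1) - q j)) - p N + p 0 := by
    intro N
    induction N with
    | zero => simp
    | succ n ih => rw [Finset.sum_range_succ, Finset.sum_range_succ, ih]; ring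
  have htends : Tendsto (fun N => ∑ k ∈ Finset.range N, (p k - q k)) atTop
      (𝓝 (Real.tan x)) := by
    simp only [hkey]
    have h3 := (htend2.sub hploc).add (tendsto_const_nhds (x := p 0))
    simp only [sub_zero] at h3
    have : Real.tan x - p 0 + p 0 = Real.tan x := by ring
    rw [this] at h3
    exact h3
  have hfinal : HasSum (fun k : ℕ => p k - q k) (Real.tan x) :=
    (hsum.hasSum_iff_tendsto_nat).2 htends
  have h2 := hfinal.div_const 2
  have heq : (fun k : ℕ => 1/((2*(k:ℝ)+1)*π - 2*x) - 1/((2*(k:ℝ)+1)*π + 2*x))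
      = fun k : ℕ => (p k - q k)/2 := by
    funext k
    rw [hp, hq]
    have h1 := (hD1pos k).ne'
    have h2 := (hD2pos k).ne'
    field_simp
  rw [heq]
  exact h2


/-- the term of the series after m differentiations (up to constant) -/
def T (m k : ℕ) (y : ℝ) : ℝ :=
  1/((2*(k:ℝ)+1)*π - 2*y)^(m+1) - (-1)^m/((2*(k:ℝ)+1)*π + 2*y)^(m+1)

lemma inv_pow_bound {B d : ℝ} (hB : 0 < B) (k m : ℕ) (hd : (2*(k:ℝ)+1)*B ≤ d) :
    1/d^(m+2) ≤ 1/(((k:ℝ)+1)^2 * B^(m+2)) := by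
  have hk : (0:ℝ) ≤ (k:ℝ) := Nat.cast_nonneg k
  have h21 : (0:ℝ) < 2*(k:ℝ)+1 := by linarith
  have hdpos : 0 < d := lt_of_lt_of_le (by positivity) hd
  rw [div_le_div_iff₀ (by positivity) (by positivity), one_mul, one_mul]
  calc ((k:ℝ)+1)^2 * B^(m+2) ≤ (2*(k:ℝ)+1)^2 * B^(m+2) := by
        have : ((k:ℝ)+1)^2 ≤ (2*(k:ℝ)+1)^2 := by nlinarith
        have hBp : (0:ℝ) ≤ B^(m+2) := by positivity
        nlinarith
    _ ≤ (2*(k:ℝ)+1)^(m+2) * B^(m+2) := by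
        have : (2*(k:ℝ)+1)^2 ≤ (2*(k:ℝ)+1)^(m+2) := by
          apply pow_le_pow_right₀ (by linarith) (by omega)
        have hBp : (0:ℝ) ≤ B^(m+2) := by positivity
        nlinarith
    _ = ((2*(k:ℝ)+1)*B)^(m+2) := by rw [mul_pow]
    _ ≤ d^(m+2) := pow_le_pow_left₀ (by positivity) hd _

lemma main_hasSum : ∀ m : ℕ, ∀ x : ℝ, |x| < π/2 →
    HasSum (fun k : ℕ => T m k x)
      (iteratedDeriv m Real.tan x / (2^(m+1) * (Nat.factorial m))) := by
  intro m
  induction m with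
  | zero =>
    intro x hx
    have h := base_hasSum x hx
    have heq : (fun k : ℕ => T 0 k x)
        = fun k : ℕ => 1/((2*(k:ℝ)+1)*π - 2*x) - 1/((2*(k:ℝ)+1)*π + 2*x) := by
      funext k
      simp [T]
    rw [heq]
    simpa [iteratedDeriv_zero] using h
  | succ m ih =>
    intro x hx
    have hπ := Real.pi_pos
    set b := (|x| + π/2)/2 with hb
    have hxb : |x| < b := by rw [hb]; linarith
    have hbπ : b < π/2 := by rw [hb]; linarith
    have hb0 : 0 < b := by
      rw [hb]; have := abs_nonneg x; linarith
    have hπ2b : 0 < π - 2*b := by linarith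
    set s := Set.Ioo (-b) b with hs
    have hxmem : x ∈ s := by
      rw [hs]; constructor
      · have := abs_lt.mp hxb; exact this.1
      · exact (abs_lt.mp hxb).2
    have hmem_lt : ∀ y ∈ s, |y| < π/2 := by
      intro y hy
      rw [hs] at hy
      rw [abs_lt]
      constructor <;> [linarith [hy.1]; linarith [hy.2]]
    -- denominators positive and bounded below on s
    have hD1 : ∀ (k : ℕ), ∀ y ∈ s, (2*(k:ℝ)+1)*(π-2*b) ≤ (2*(k:ℝ)+1)*π - 2*y := by
      intro k y hy
      rw [hs] at hy
      have hk : (0:ℝ) ≤ (k:ℝ) := Nat.cast_nonneg k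
      have := hy.2
      nlinarith
    have hD2 : ∀ (k : ℕ), ∀ y ∈ s, (2*(k:ℝ)+1)*(π-2*b) ≤ (2*(k:ℝ)+1)*π + 2*y := by
      intro k y hy
      rw [hs] at hy
      have hk : (0:ℝ) ≤ (k:ℝ) := Nat.cast_nonneg k
      have := hy.1
      nlinarith
    have hD1pos : ∀ (k : ℕ), ∀ y ∈ s, (0:ℝ) < (2*(k:ℝ)+1)*π - 2*y := by
      intro k y hy
      have hk : (0:ℝ) ≤ (k:ℝ) := Nat.cast_nonneg k
      calc (0:ℝ) < (2*(k:ℝ)+1)*(π-2*b) := by positivity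
        _ ≤ _ := hD1 k y hy
    have hD2pos : ∀ (k : ℕ), ∀ y ∈ s, (0:ℝ) < (2*(k:ℝ)+1)*π + 2*y := by
      intro k y hy
      have hk : (0:ℝ) ≤ (k:ℝ) := Nat.cast_nonneg k
      calc (0:ℝ) < (2*(k:ℝ)+1)*(π-2*b) := by positivity
        _ ≤ _ := hD2 k y hy
    -- derivative of each term
    have hder : ∀ (k : ℕ), ∀ y ∈ s,
        HasDerivAt (fun z => T m k z) ((2*((m:ℝ)+1)) * T (m+1) k y) y := by
      intro k y hy
      have hd1 : (2*(k:ℝ)+1)*π - 2*y ≠ 0 := (hD1pos k y hy).ne'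
      have hd2 : (2*(k:ℝ)+1)*π + 2*y ≠ 0 := (hD2pos k y hy).ne'
      set c := (2*(k:ℝ)+1)*π with hc
      have h1 : HasDerivAt (fun z : ℝ => c - 2*z) (-2) y := by
        simpa using ((hasDerivAt_id y).const_mul (2:ℝ)).const_sub c
      have h2 : HasDerivAt (fun z : ℝ => c + 2*z) (2) y := by
        simpa using ((hasDerivAt_id y).const_mul (2:ℝ)).const_add c
      have h1p := h1.fun_pow (m+1)
      have h2p := h2.fun_pow (m+1)
      simp only [Nat.add_sub_cancel] at h1p h2p
      have h1i := h1p.inv (pow_ne_zero _ hd1)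
      have h2i := h2p.inv (pow_ne_zero _ hd2)
      have hcomb : HasDerivAt (fun z : ℝ => ((c - 2*z)^(m+1))⁻¹ - (-1:ℝ)^m * ((c + 2*z)^(m+1))⁻¹) _ y :=
        h1i.sub (h2i.const_mul ((-1:ℝ)^m))
      have hfun : (fun z : ℝ => ((c - 2*z)^(m+1))⁻¹ - (-1:ℝ)^m * ((c + 2*z)^(m+1))⁻¹)
          = fun z => T m k z := by
        funext z
        rw [T, hc]
        rw [one_div, div_eq_mul_inv]
      rw [hfun] at hcomb
      convert hcomb using 1
      have e1 : -((↑(m+1) : ℝ) * (c - 2*y)^m * (-2)) / ((c - 2*y)^(m+1))^2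
          = 2*((m:ℝ)+1) / (c - 2*y)^(m+2) := by
        have h2m : ((c - 2*y)^(m+1))^2 = (c - 2*y)^(m+2) * (c - 2*y)^m := by
          rw [← pow_mul, ← pow_add]
          congr 1
          ring
        rw [h2m, div_eq_div_iff (mul_ne_zero (pow_ne_zero _ hd1) (pow_ne_zero _ hd1))
          (pow_ne_zero _ hd1)]
        push_cast
        ring
      have e2 : -((↑(m+1) : ℝ) * (c + 2*y)^m * 2) / ((c + 2*y)^(m+1))^2
          = -(2*((m:ℝ)+1)) / (c + 2*y)^(m+2) := by
        have h2m : ((c + 2*y)^(m+1))^2 = (c + 2*y)^(m+2) * (c + 2*y)^m := by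
          rw [← pow_mul, ← pow_add]
          congr 1
          ring
        rw [h2m, div_eq_div_iff (mul_ne_zero (pow_ne_zero _ hd2) (pow_ne_zero _ hd2))
          (pow_ne_zero _ hd2)]
        push_cast
        ring
      rw [e1, e2, T, hc]
      rw [pow_succ]
      field_simp
      ring
    -- summable bound
    set C := 2*((m:ℝ)+1) * 2 / (π-2*b)^(m+2) with hC
    set u : ℕ → ℝ := fun k => C * (1/((k:ℝ)+1)^2) with hu
    have husum : Summable u := summable_one_div_sq.mul_left C
    have hbound : ∀ (k : ℕ), ∀ y ∈ s, ‖(2*((m:ℝ)+1)) * T (m+1) k y‖ ≤ u k := by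
      intro k y hy
      have b1 := inv_pow_bound hπ2b k m (hD1 k y hy)
      have b2 := inv_pow_bound hπ2b k m (hD2 k y hy)
      have hd1p := hD1pos k y hy
      have hd2p := hD2pos k y hy
      have hT : |T (m+1) k y| ≤ 1/((2*(k:ℝ)+1)*π - 2*y)^(m+2) +
          1/((2*(k:ℝ)+1)*π + 2*y)^(m+2) := by
        rw [T]
        refine (abs_sub _ _).trans ?_
        have q1 : |1/((2*(k:ℝ)+1)*π - 2*y)^(m+1+1)| = 1/((2*(k:ℝ)+1)*π - 2*y)^(m+2) := by
          rw [abs_of_pos]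
          positivity
        have q2 : |(-1:ℝ)^(m+1)/((2*(k:ℝ)+1)*π + 2*y)^(m+1+1)|
            = 1/((2*(k:ℝ)+1)*π + 2*y)^(m+2) := by
          rw [abs_div, abs_pow, abs_neg, abs_one, one_pow]
          rw [abs_of_pos (by positivity)]
        rw [q1, q2]
      rw [Real.norm_eq_abs, abs_mul]
      have hmpos : (0:ℝ) ≤ 2*((m:ℝ)+1) := by positivity
      rw [abs_of_nonneg hmpos]
      calc 2*((m:ℝ)+1) * |T (m+1) k y|
          ≤ 2*((m:ℝ)+1) * (1/((2*(k:ℝ)+1)*π - 2*y)^(m+2) +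
            1/((2*(k:ℝ)+1)*π + 2*y)^(m+2)) := by
            apply mul_le_mul_of_nonneg_left hT hmpos
        _ ≤ 2*((m:ℝ)+1) * (1/(((k:ℝ)+1)^2 * (π-2*b)^(m+2)) +
            1/(((k:ℝ)+1)^2 * (π-2*b)^(m+2))) := by
            apply mul_le_mul_of_nonneg_left (add_le_add b1 b2) hmpos
        _ = u k := by
            rw [hu, hC]
            field_simp
            ring
    -- apply the derivative-of-series theorem
    have hsum0 : Summable (fun k => T m k x) := (ih x hx).summable
    have hderiv := hasDerivAt_tsum_of_isPreconnected husum
      (isOpen_Ioo : IsOpen s) (isPreconnected_Ioo)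
      hder hbound hxmem hsum0 hxmem
    -- identify the tsum with the iterated derivative
    set Cm := (2^(m+1) * (Nat.factorial m) : ℝ) with hCm
    have hCmne : Cm ≠ 0 := by
      rw [hCm]
      positivity
    have hfeq : (fun y => ∑' k, T m k y)
        =ᶠ[nhds x] fun y => iteratedDeriv m Real.tan y / Cm := by
      filter_upwards [(isOpen_Ioo : IsOpen s).mem_nhds hxmem] with y hy
      exact (ih y (hmem_lt y hy)).tsum_eq
    have hD : HasDerivAt (fun y => iteratedDeriv m Real.tan y / Cm)
        (∑' k, (2*((m:ℝ)+1)) * T (m+1) k x) x := hderiv.congr_of_eventuallyEq hfeq.symm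
    have hD2' : HasDerivAt (iteratedDeriv m Real.tan)
        (Cm * ∑' k, (2*((m:ℝ)+1)) * T (m+1) k x) x := by
      have h := hD.const_mul Cm
      have : (fun y => Cm * (iteratedDeriv m Real.tan y / Cm))
          = iteratedDeriv m Real.tan := by
        funext y
        field_simp
      rwa [this] at h
    have hiter : iteratedDeriv (m+1) Real.tan x
        = Cm * ∑' k, (2*((m:ℝ)+1)) * T (m+1) k x := by
      rw [iteratedDeriv_succ]
      exact hD2'.deriv
    -- summability of T (m+1) at x
    have hsum1 : Summable (fun k => (2*((m:ℝ)+1)) * T (m+1) k x) :=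
      Summable.of_norm_bounded husum (fun k => hbound k x hxmem)
    have hm1 : (2*((m:ℝ)+1)) ≠ 0 := by positivity
    have hsum2 : Summable (fun k => T (m+1) k x) := by
      have := hsum1.div_const (2*((m:ℝ)+1))
      apply this.congr
      intro k
      field_simp
    -- conclude
    rw [Summable.hasSum_iff hsum2]
    have htsum : ∑' k, (2*((m:ℝ)+1)) * T (m+1) k x
        = (2*((m:ℝ)+1)) * ∑' k, T (m+1) k x := tsum_mul_left
    rw [htsum] at hiter
    have hfact : (2^(m+1+1) * (Nat.factorial (m+1)) : ℝ) = 2*((m:ℝ)+1) * Cm := by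
      rw [hCm, Nat.factorial_succ]
      push_cast
      ring
    rw [hfact, hiter]
    field_simp

end TanSeriesAux

end TanSeries

open Real
theorem stmt_12 (n : ℕ) (hn : 0 < n) (x : ℝ) (hx : |x| < π / 2) :
    (1 / 2 ^ (2 * n - 1)) * (1 / (Nat.factorial (2 * n - 2))) *
        iteratedDeriv (2 * n - 2) Real.tan x =
      ∑' k : ℕ, (1 / ((2 * (k : ℝ) + 1) * π - 2 * x) ^ (2 * n - 1) -
        1 / ((2 * (k : ℝ) + 1) * π + 2 * x) ^ (2 * n - 1)) := by
  have hm := TanSeriesAux.main_hasSum (2*n-2) x hx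
  have h1 : 2*n-2+1 = 2*n-1 := by omega
  have heven : ((-1:ℝ))^(2*n-2) = 1 := Even.neg_one_pow ⟨n-1, by omega⟩
  have heq : (fun k : ℕ => TanSeriesAux.T (2*n-2) k x)
      = fun k : ℕ => (1 / ((2 * (k : ℝ) + 1) * π - 2 * x) ^ (2 * n - 1) -
        1 / ((2 * (k : ℝ) + 1) * π + 2 * x) ^ (2 * n - 1)) := by
    funext k
    rw [TanSeriesAux.T, h1, heven]
  have ht := hm.tsum_eq
  rw [heq] at ht
  rw [ht, h1]
  ring
end

section
/- For all real x with |x| < π/2, sec^2 x = 8 · ∑_{k≥0} ((2k+1)^2 π^2 + 4x^2)/(((2k+1)^2 π^2 - 4x^2)^2). -/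
open Real Finset Filter Topology

private lemma alg' (A s c : ℝ) (hA : A ≠ 0) (hs : s ≠ 0) (hc : c ≠ 0) (hpy : s ^ 2 + c ^ 2 = 1) :
    1 / (A * (2 * s * c) ^ 2) = 1 / (A * 4 * s ^ 2) + 1 / (A * 4 * c ^ 2) := by
  have h1 : s ^ 2 = 1 - c ^ 2 := by linarith
  have h2 : (1 : ℝ) - c ^ 2 ≠ 0 := by rw [← h1]; positivity
  rw [show (2 * s * c) ^ 2 = 4 * s ^ 2 * c ^ 2 by ring, h1]
  field_simp
  ring

private noncomputable def cfun (y : ℝ) (N j : ℕ) : ℝ :=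
  1 / (4 ^ (N + 1) * Real.sin ((y + j * π) / 2 ^ (N + 1)) ^ 2)

private noncomputable def ffun (y : ℝ) (N k : ℕ) : ℝ :=
  if k < 2 ^ N then cfun y N k + cfun y N (2 ^ (N + 1) - 1 - k) else 0

-- dyadic identity
private lemma sumA (M : ℕ) (y : ℝ) (h0 : 0 < y) (h1 : y < π) :
    1 / Real.sin y ^ 2 =
      ∑ j ∈ Finset.range (2 ^ M), 1 / (4 ^ M * Real.sin ((y + j * π) / 2 ^ M) ^ 2) := by
  induction M with
  | zero => simp
  | succ M ih =>
    rw [pow_succ 2 M, mul_two, Finset.sum_range_add, ih, ← Finset.sum_add_distrib]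
    apply Finset.sum_congr rfl
    intro j hj
    rw [Finset.mem_range] at hj
    set t : ℝ := (y + j * π) / 2 ^ M with ht
    have hπ := Real.pi_pos
    have ht0 : 0 < t := by
      apply div_pos (by positivity) (by positivity)
    have ht1 : t < π := by
      rw [ht, div_lt_iff₀ (by positivity)]
      have : (j : ℝ) ≤ 2 ^ M - 1 := by
        have : (j : ℝ) ≤ (2 ^ M - 1 : ℕ) := by exact_mod_cast Nat.le_sub_one_of_lt hj
        simpa [Nat.cast_sub (Nat.one_le_two_pow)] using this
      nlinarith [hπ]
    have hs : Real.sin (t / 2) ≠ 0 :=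
      ne_of_gt (Real.sin_pos_of_pos_of_lt_pi (by linarith) (by linarith))
    have hc : Real.cos (t / 2) ≠ 0 :=
      ne_of_gt (Real.cos_pos_of_mem_Ioo ⟨by linarith, by linarith⟩)
    have hdup : Real.sin t = 2 * Real.sin (t / 2) * Real.cos (t / 2) := by
      rw [← Real.sin_two_mul]; ring_nf
    have e1 : (y + j * π) / 2 ^ (M + 1) = t / 2 := by
      rw [ht, pow_succ]; ring
    have e2 : (y + (2 ^ M + j : ℕ) * π) / 2 ^ (M + 1) = t / 2 + π / 2 := by
      rw [ht, pow_succ]; push_cast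
      have h2M : (2 : ℝ) ^ M ≠ 0 := by positivity
      field_simp
      ring
    rw [e1, e2, Real.sin_add_pi_div_two, hdup, pow_succ 4 M]
    exact alg' _ _ _ (by positivity) hs hc (Real.sin_sq_add_cos_sq _)

-- bound lemma
private lemma cbnd (a : ℝ) (N : ℕ) (h0 : 0 < a) (h1 : a ≤ 2 ^ N * π) :
    1 / (4 ^ (N + 1) * Real.sin (a / 2 ^ (N + 1)) ^ 2) ≤ π ^ 2 / 4 * (1 / a ^ 2) := by
  have hπ := Real.pi_pos
  set t : ℝ := a / 2 ^ (N + 1) with ht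
  have ht0 : 0 < t := by positivity
  have ht1 : t ≤ π / 2 := by
    rw [ht, div_le_iff₀ (by positivity), pow_succ]
    nlinarith [h1]
  have hms := Real.mul_le_sin ht0.le ht1
  have hq : (2 / π * t) ^ 2 ≤ Real.sin t ^ 2 :=
    pow_le_pow_left₀ (by positivity) hms 2
  have h4 : (4 : ℝ) ^ (N + 1) = ((2 : ℝ) ^ (N + 1)) ^ 2 := by
    rw [pow_right_comm]; norm_num
  have hat : a = 2 ^ (N + 1) * t := by rw [ht]; field_simp
  calc 1 / (4 ^ (N + 1) * Real.sin t ^ 2)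
      ≤ 1 / (4 ^ (N + 1) * (2 / π * t) ^ 2) := by
        apply one_div_le_one_div_of_le (by positivity)
        exact mul_le_mul_of_nonneg_left hq (by positivity)
    _ = π ^ 2 / 4 * (1 / a ^ 2) := by
        rw [hat, h4]
        field_simp
        ring

private lemma sumaux (c : ℝ) (hc : 0 < c) : Summable (fun k : ℕ => 1 / (c + k * π) ^ 2) := by
  have hπ := Real.pi_pos
  rw [← summable_nat_add_iff 1]
  have hb : Summable (fun k : ℕ => 1 / π ^ 2 * (1 / ((k : ℝ) + 1) ^ 2)) := by
    apply Summable.mul_left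
    have := (summable_nat_add_iff 1).mpr (summable_one_div_nat_pow.mpr (by norm_num : 2 ≤ 2))
    simpa using this
  apply Summable.of_nonneg_of_le (fun k => by positivity) _ hb
  intro k
  have hpos : (0:ℝ) < ((k : ℝ) + 1) * π := by positivity
  calc 1 / (c + ((k + 1 : ℕ) : ℝ) * π) ^ 2 ≤ 1 / (((k : ℝ) + 1) * π) ^ 2 := by
        apply one_div_le_one_div_of_le (by positivity)
        have : ((k : ℝ) + 1) * π ≤ c + ((k + 1 : ℕ) : ℝ) * π := by push_cast; nlinarith
        nlinarith
    _ = 1 / π ^ 2 * (1 / ((k : ℝ) + 1) ^ 2) := by field_simp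

private lemma climit (a : ℝ) (ha : a ≠ 0) :
    Filter.Tendsto (fun N : ℕ => 1 / (4 ^ (N + 1) * Real.sin (a / 2 ^ (N + 1)) ^ 2)) atTop
      (𝓝 (1 / a ^ 2)) := by
  have hu : Tendsto (fun N : ℕ => a / 2 ^ (N + 1)) atTop (𝓝 0) := by
    have h2 : Tendsto (fun N : ℕ => ((2 : ℝ) ^ (N + 1))) atTop atTop :=
      (tendsto_pow_atTop_atTop_of_one_lt (by norm_num : (1:ℝ) < 2)).comp
        (tendsto_add_atTop_nat 1)
    exact Tendsto.div_atTop tendsto_const_nhds h2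
  have hslope : Tendsto (fun u : ℝ => Real.sin u / u) (𝓝[≠] 0) (𝓝 1) := by
    have := hasDerivAt_iff_tendsto_slope.mp (Real.hasDerivAt_sin 0)
    rw [Real.cos_zero] at this
    apply this.congr'
    filter_upwards [self_mem_nhdsWithin] with u hu'
    simp [slope_def_field]
  have huin : Tendsto (fun N : ℕ => a / 2 ^ (N + 1)) atTop (𝓝[≠] 0) := by
    rw [tendsto_nhdsWithin_iff]
    refine ⟨hu, Eventually.of_forall fun N => ?_⟩
    simp only [Set.mem_compl_iff, Set.mem_singleton_iff]
    positivity
  have hsin : Tendsto (fun N : ℕ => Real.sin (a / 2 ^ (N + 1)) / (a / 2 ^ (N + 1)))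
      atTop (𝓝 1) := hslope.comp huin
  have key : Tendsto (fun N : ℕ => 4 ^ (N + 1) * Real.sin (a / 2 ^ (N + 1)) ^ 2) atTop
      (𝓝 (a ^ 2)) := by
    have heq : ∀ N : ℕ, 4 ^ (N + 1) * Real.sin (a / 2 ^ (N + 1)) ^ 2 =
        a ^ 2 * (Real.sin (a / 2 ^ (N + 1)) / (a / 2 ^ (N + 1))) ^ 2 := by
      intro N
      have h2 : (2 : ℝ) ^ (N + 1) ≠ 0 := by positivity
      have h4 : (4 : ℝ) ^ (N + 1) = ((2 : ℝ) ^ (N + 1)) ^ 2 := by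
        rw [pow_right_comm]; norm_num
      rw [h4]
      field_simp
    rw [show (a ^ 2 : ℝ) = a ^ 2 * 1 ^ 2 by ring]
    exact Tendsto.congr (fun N => (heq N).symm) (tendsto_const_nhds.mul (hsin.pow 2))
  have ha2 : (a ^ 2 : ℝ) ≠ 0 := pow_ne_zero _ ha
  simpa only [one_div] using key.inv₀ ha2

-- rewriting of the mirrored term
private lemma csecond (y : ℝ) (N k : ℕ) (hk : k < 2 ^ N) :
    cfun y N (2 ^ (N + 1) - 1 - k) =
      1 / (4 ^ (N + 1) * Real.sin ((((k : ℝ) + 1) * π - y) / 2 ^ (N + 1)) ^ 2) := by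
  have hle : k + 1 ≤ 2 ^ (N + 1) :=
    le_trans (Nat.succ_le_of_lt hk) (Nat.pow_le_pow_right (by norm_num) (Nat.le_succ N))
  have hmr : ((2 ^ (N + 1) - 1 - k : ℕ) : ℝ) = 2 ^ (N + 1) - ((k : ℝ) + 1) := by
    have h2 : (2 ^ (N + 1) - 1 - k) + (k + 1) = 2 ^ (N + 1) := by omega
    have h3 := congrArg (Nat.cast (R := ℝ)) h2
    push_cast at h3
    linarith
  have h2 : (2 : ℝ) ^ (N + 1) ≠ 0 := by positivity
  have e : (y + ((2 ^ (N + 1) - 1 - k : ℕ) : ℝ) * π) / 2 ^ (N + 1) =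
      π - ((((k : ℝ) + 1) * π - y) / 2 ^ (N + 1)) := by
    rw [hmr]; field_simp; ring
  rw [cfun, e, Real.sin_pi_sub]

open Real
theorem stmt_14 (x : ℝ) (hx : |x| < π / 2) :
    (1 / Real.cos x) ^ 2 =
      8 * ∑' k : ℕ, ((2 * (k : ℝ) + 1) ^ 2 * π ^ 2 + 4 * x ^ 2) /
        ((2 * (k : ℝ) + 1) ^ 2 * π ^ 2 - 4 * x ^ 2) ^ 2 := by
  have hπ := Real.pi_pos
  rw [abs_lt] at hx
  set y : ℝ := x + π / 2 with hy
  have h0 : 0 < y := by rw [hy]; linarith [hx.1]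
  have h1 : y < π := by rw [hy]; linarith [hx.2]
  have hcos : Real.cos x = Real.sin y := (Real.sin_add_pi_div_two x).symm
  set g : ℕ → ℝ := fun k => 1 / (y + k * π) ^ 2 + 1 / (((k : ℝ) + 1) * π - y) ^ 2 with hg
  set bound : ℕ → ℝ := fun k =>
    π ^ 2 / 4 * (1 / (y + k * π) ^ 2) + π ^ 2 / 4 * (1 / (((k : ℝ) + 1) * π - y) ^ 2) with hbd
  -- the second denominators are positive
  have hbpos : ∀ k : ℕ, 0 < ((k : ℝ) + 1) * π - y := by
    intro k
    have hk : (0:ℝ) ≤ (k : ℝ) := Nat.cast_nonneg k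
    nlinarith
  -- (1) constant partial sums
  have hfs : ∀ N : ℕ, ∑' k : ℕ, ffun y N k = 1 / Real.sin y ^ 2 := by
    intro N
    rw [tsum_eq_sum (s := Finset.range (2 ^ N))
      (fun b hb => by rw [ffun, if_neg (fun h => hb (Finset.mem_range.mpr h))])]
    rw [Finset.sum_congr rfl
      (fun k hk => by rw [ffun, if_pos (Finset.mem_range.mp hk)]), Finset.sum_add_distrib]
    have hrefl : ∑ k ∈ Finset.range (2 ^ N), cfun y N (2 ^ (N + 1) - 1 - k) =
        ∑ k ∈ Finset.range (2 ^ N), cfun y N (2 ^ N + k) := by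
      rw [← Finset.sum_range_reflect (fun k => cfun y N (2 ^ N + k)) (2 ^ N)]
      apply Finset.sum_congr rfl
      intro k hk
      rw [Finset.mem_range] at hk
      congr 1
      have h2 : 2 ^ (N + 1) = 2 ^ N + 2 ^ N := by rw [pow_succ, Nat.mul_two]
      omega
    rw [hrefl, ← Finset.sum_range_add (fun j => cfun y N j) (2 ^ N) (2 ^ N),
      show 2 ^ N + 2 ^ N = 2 ^ (N + 1) by rw [pow_succ, Nat.mul_two]]
    exact (sumA (N + 1) y h0 h1).symm
  -- (2) pointwise limits
  have hpt : ∀ k : ℕ, Tendsto (fun N => ffun y N k) atTop (𝓝 (g k)) := by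
    intro k
    have hev : (fun N => ffun y N k) =ᶠ[atTop]
        (fun N => 1 / (4 ^ (N + 1) * Real.sin ((y + k * π) / 2 ^ (N + 1)) ^ 2) +
          1 / (4 ^ (N + 1) * Real.sin ((((k : ℝ) + 1) * π - y) / 2 ^ (N + 1)) ^ 2)) := by
      filter_upwards [eventually_ge_atTop k] with N hN
      have hkN : k < 2 ^ N := lt_of_lt_of_le (Nat.lt_two_pow_self (n := k))
        (Nat.pow_le_pow_right (by norm_num) hN)
      rw [ffun, if_pos hkN, csecond y N k hkN, cfun]
    have ha : y + (k : ℝ) * π ≠ 0 := by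
      have : (0:ℝ) ≤ (k : ℝ) := Nat.cast_nonneg k
      nlinarith
    have hb : ((k : ℝ) + 1) * π - y ≠ 0 := ne_of_gt (hbpos k)
    exact Tendsto.congr' hev.symm ((climit _ ha).add (climit _ hb))
  -- (3) domination
  have hdom : ∀ N : ℕ, ∀ k : ℕ, ‖ffun y N k‖ ≤ bound k := by
    intro N k
    by_cases hk : k < 2 ^ N
    · have hk1 : ((k : ℝ) + 1) ≤ 2 ^ N := by
        have : (k + 1 : ℕ) ≤ 2 ^ N := hk
        exact_mod_cast this
      have hc1 : cfun y N k ≤ π ^ 2 / 4 * (1 / (y + k * π) ^ 2) := by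
        rw [cfun]
        apply cbnd
        · have : (0:ℝ) ≤ (k : ℝ) := Nat.cast_nonneg k
          nlinarith
        · nlinarith
      have hc2 : cfun y N (2 ^ (N + 1) - 1 - k) ≤
          π ^ 2 / 4 * (1 / (((k : ℝ) + 1) * π - y) ^ 2) := by
        rw [csecond y N k hk]
        apply cbnd _ _ (hbpos k)
        nlinarith [hbpos k]
      have hnn1 : 0 ≤ cfun y N k := by rw [cfun]; positivity
      have hnn2 : 0 ≤ cfun y N (2 ^ (N + 1) - 1 - k) := by
        rw [csecond y N k hk]; positivity
      rw [ffun, if_pos hk, Real.norm_eq_abs, abs_of_nonneg (by linarith)]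
      rw [hbd]
      exact add_le_add hc1 hc2
    · rw [ffun, if_neg hk, norm_zero, hbd]
      have := hbpos k
      positivity
  -- (4) summability of the bound
  have hsumbd : Summable bound := by
    apply Summable.add
    · exact (sumaux y h0).mul_left _
    · apply Summable.mul_left
      apply Summable.congr (sumaux (π - y) (by linarith))
      intro k
      congr 2
      ring
  -- Tannery
  have hT := tendsto_tsum_of_dominated_convergence hsumbd hpt (Eventually.of_forall hdom)
  have hconst : Tendsto (fun N => ∑' k : ℕ, ffun y N k) atTop (𝓝 (1 / Real.sin y ^ 2)) := by
    simp only [hfs]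
    exact tendsto_const_nhds
  have hkey : 1 / Real.sin y ^ 2 = ∑' k, g k := tendsto_nhds_unique hconst hT
  -- final algebra
  have hterm : ∀ k : ℕ, g k =
      8 * (((2 * (k : ℝ) + 1) ^ 2 * π ^ 2 + 4 * x ^ 2) /
        ((2 * (k : ℝ) + 1) ^ 2 * π ^ 2 - 4 * x ^ 2) ^ 2) := by
    intro k
    have hkc : (0:ℝ) ≤ (k : ℝ) := Nat.cast_nonneg k
    have ha : y + (k : ℝ) * π ≠ 0 := by nlinarith
    have hb : ((k : ℝ) + 1) * π - y ≠ 0 := ne_of_gt (hbpos k)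
    have hd : (2 * (k : ℝ) + 1) ^ 2 * π ^ 2 - 4 * x ^ 2 ≠ 0 := by
      have hx2 : x ^ 2 < π ^ 2 / 4 := by nlinarith [hx.1, hx.2]
      have : π ^ 2 ≤ (2 * (k : ℝ) + 1) ^ 2 * π ^ 2 := by
        nlinarith [mul_nonneg (mul_nonneg hkc hkc) (sq_nonneg π), mul_nonneg hkc (sq_nonneg π)]
      nlinarith
    set b : ℝ := (2 * (k : ℝ) + 1) * π / 2 with hbdef
    have e1 : y + (k : ℝ) * π = x + b := by rw [hy, hbdef]; ring
    have e2 : ((k : ℝ) + 1) * π - y = b - x := by rw [hy, hbdef]; ring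
    have hb2 : (2 * (k : ℝ) + 1) ^ 2 * π ^ 2 = 4 * b ^ 2 := by rw [hbdef]; ring
    have h1 : x + b ≠ 0 := by rw [← e1]; exact ha
    have h2 : b - x ≠ 0 := by rw [← e2]; exact hb
    have hd' : 4 * b ^ 2 - 4 * x ^ 2 ≠ 0 := by rw [← hb2]; exact hd
    rw [hg]
    simp only
    rw [e1, e2, hb2]
    rw [show 4 * b ^ 2 - 4 * x ^ 2 = 4 * ((x + b) * (b - x)) by ring]
    field_simp
    ring
  have hsum : ∑' k, g k = 8 * ∑' k : ℕ, ((2 * (k : ℝ) + 1) ^ 2 * π ^ 2 + 4 * x ^ 2) /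
      ((2 * (k : ℝ) + 1) ^ 2 * π ^ 2 - 4 * x ^ 2) ^ 2 := by
    rw [tsum_congr hterm, tsum_mul_left]
  calc (1 / Real.cos x) ^ 2 = 1 / Real.sin y ^ 2 := by rw [hcos, div_pow, one_pow]
    _ = ∑' k, g k := hkey
    _ = _ := hsum
end

section
/- π^2 = 8 · ∑_{k≥0} (4 + (2k+1)^2)/((4 - (2k+1)^2)^2), where the k = 0 term is (4+1)/(4-1)^2 = 5/9. -/
set_option maxHeartbeats 1000000


open Real

lemma odd_sq_sum : HasSum (fun k : ℕ => (1 : ℝ) / (2 * (k : ℝ) + 1) ^ 2) (π ^ 2 / 8) := by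
  set f : ℕ → ℝ := fun n => (1 : ℝ) / (n : ℝ) ^ 2 with hf
  have htotal : HasSum f (π ^ 2 / 6) := hasSum_zeta_two
  have heven : HasSum (fun k : ℕ => f (2 * k)) (π ^ 2 / 24) := by
    have h4 := htotal.mul_left (1 / 4)
    have h24 : π ^ 2 / 24 = 1 / 4 * (π ^ 2 / 6) := by ring
    rw [h24]
    convert h4 using 1
    case e'_3 => rfl
    funext k
    simp only [hf]
    rcases Nat.eq_zero_or_pos k with hk | hk
    · subst hk; norm_num
    · have hk' : ((k : ℝ)) ≠ 0 := Nat.cast_ne_zero.mpr hk.ne'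
      push_cast
      field_simp
      ring
  have hoddsummable : Summable (fun k : ℕ => f (2 * k + 1)) := by
    have hi : Function.Injective (fun k : ℕ => 2 * k + 1) := fun a b h => by
      simp only [] at h; omega
    exact htotal.summable.comp_injective hi
  obtain ⟨S, hS⟩ := hoddsummable
  have hsum := heven.even_add_odd hS
  have hval : π ^ 2 / 24 + S = π ^ 2 / 6 := hsum.unique htotal
  have hSval : S = π ^ 2 / 8 := by linarith
  rw [hSval] at hS
  convert hS using 2 with k
  simp only [hf]
  push_cast
  ring

theorem stmt_15 :
    π ^ 2 = 8 * ∑' k : ℕ, (4 + (2 * (k : ℝ) + 1) ^ 2) /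
      (4 - (2 * (k : ℝ) + 1) ^ 2) ^ 2 := by
  have hS := odd_sq_sum
  set f : ℕ → ℝ := fun k => (1 : ℝ) / (2 * (k : ℝ) - 1) ^ 2 with hf
  set g : ℕ → ℝ := fun k => (1 : ℝ) / (2 * (k : ℝ) + 1) ^ 2 with hg
  -- A : ∑ 1/(2k-1)^2 = π²/8 + 1
  have h1' : HasSum (fun n : ℕ => f (n + 1)) (π ^ 2 / 8) := by
    have he : (fun n : ℕ => f (n + 1)) = g := by
      funext n; simp only [hf, hg]; push_cast; ring_nf
    rw [he]; exact hS
  have hA : HasSum f (π ^ 2 / 8 + 1) := by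
    have h2 := (hasSum_nat_add_iff (f := f) 1).mp h1'
    have hs0 : ∑ i ∈ Finset.range 1, f i = 1 := by simp [hf]
    rwa [hs0] at h2
  -- B : ∑ 1/(2k+3)^2 = π²/8 - 1
  have h3' : HasSum (fun n : ℕ => g (n + 1)) (π ^ 2 / 8 - 1) := by
    have h4 := (hasSum_nat_add_iff' (f := g) 1).mpr hS
    have hs0 : ∑ i ∈ Finset.range 1, g i = 1 := by simp [hg]
    rwa [hs0] at h4
  have hB : HasSum (fun k : ℕ => (1 : ℝ) / (2 * (k : ℝ) + 3) ^ 2) (π ^ 2 / 8 - 1) := by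
    have he : (fun n : ℕ => g (n + 1)) = fun k : ℕ => (1 : ℝ) / (2 * (k : ℝ) + 3) ^ 2 := by
      funext n; simp only [hg]; push_cast; ring_nf
    rwa [he] at h3'
  have hC := (hA.mul_left (1 / 2)).add (hB.mul_left (1 / 2))
  have heq : (fun k : ℕ => 1 / 2 * f k + 1 / 2 * ((1 : ℝ) / (2 * (k : ℝ) + 3) ^ 2)) =
      fun k : ℕ => (4 + (2 * (k : ℝ) + 1) ^ 2) / (4 - (2 * (k : ℝ) + 1) ^ 2) ^ 2 := by
    funext k
    simp only [hf]
    have h1 : (2 * (k : ℝ) - 1) ≠ 0 := by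
      rcases k with _ | k
      · norm_num
      · push_cast
        have hk : (0 : ℝ) ≤ (k : ℝ) := Nat.cast_nonneg k
        intro h; linarith
    have h2 : (2 * (k : ℝ) + 3) ≠ 0 := by positivity
    have h4 : (4 - (2 * (k : ℝ) + 1) ^ 2) ^ 2 = (2 * k - 1) ^ 2 * (2 * k + 3) ^ 2 := by
      ring
    rw [h4]
    field_simp
    ring
  have hv : 1 / 2 * (π ^ 2 / 8 + 1) + 1 / 2 * (π ^ 2 / 8 - 1) = π ^ 2 / 8 := by ring
  rw [heq, hv] at hC
  rw [hC.tsum_eq]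
  ring
end

section
/- For every integer n, π^2 = 8(2n+1)^2 · cos^2(π/(2n+1)) · ∑_{k≥0} (4 + (2n+1)^2 (2k+1)^2)/((4 - (2n+1)^2 (2k+1)^2)^2). -/
open Real
section helpers
open MeasureTheory Set

local instance : Fact ((0:ℝ) < 1) := ⟨one_pos⟩

noncomputable abbrev expf (t : ℝ) : ℝ → ℂ := fun x => Complex.exp (2 * π * Complex.I * t * x)

lemma norm_expf (t x : ℝ) : ‖expf t x‖ = 1 := by
  rw [Complex.norm_exp]
  have : (2 * (π:ℂ) * Complex.I * t * x).re = 0 := by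
    simp [Complex.mul_re, Complex.mul_im]
  rw [this, Real.exp_zero]

lemma measurable_expF (t : ℝ) : Measurable (AddCircle.liftIoc (1:ℝ) 0 (expf t)) := by
  have h : AddCircle.liftIoc (1:ℝ) 0 (expf t)
      = (expf t) ∘ (Subtype.val) ∘ (AddCircle.measurableEquivIoc (1:ℝ) 0) := rfl
  rw [h]
  exact (Complex.measurable_exp.comp (by fun_prop)).comp
    (measurable_subtype_coe.comp (AddCircle.measurableEquivIoc (1:ℝ) 0).measurable)

lemma summable_shift (a : ℝ) : Summable (fun n : ℤ => 1 / ((n:ℝ) + a) ^ 2) := by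
  refine ((Real.summable_one_div_int_add_rpow a 2).mpr one_lt_two).congr fun n => ?_
  rw [show ((2:ℝ)) = ((2:ℕ):ℝ) by norm_num, Real.rpow_natCast, sq_abs]

lemma fourierCoeff_expF (t : ℝ) (ht : ∀ m : ℤ, t ≠ m) (n : ℤ) :
    fourierCoeff (AddCircle.liftIoc (1:ℝ) 0 (expf t)) n
      = (Complex.exp (2 * π * Complex.I * t) - 1) / (2 * π * Complex.I * (t - n)) := by
  have hc : (2 * (π:ℂ) * Complex.I * ((t:ℂ) - n)) ≠ 0 := by
    have h1 : ((t:ℂ) - n) ≠ 0 := by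
      simpa [sub_eq_zero] using fun h => ht n (by exact_mod_cast h)
    simp [Real.pi_ne_zero, Complex.I_ne_zero, h1]
  rw [fourierCoeff_eq_intervalIntegral _ n 0]
  have hint : ∀ x ∈ Ioc (0:ℝ) (0+1),
      (fourier (-n) (x : AddCircle (1:ℝ))) • (AddCircle.liftIoc (1:ℝ) 0 (expf t) ↑x)
        = Complex.exp ((2 * π * Complex.I * ((t:ℂ) - n)) * x) := by
    intro x hx
    rw [AddCircle.liftIoc_coe_apply hx, fourier_coe_apply, smul_eq_mul, ← Complex.exp_add]
    congr 1
    push_cast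
    field_simp
    ring
  rw [intervalIntegral.integral_congr_ae (g := fun x : ℝ =>
      Complex.exp ((2 * π * Complex.I * ((t:ℂ) - n)) * x))
    (MeasureTheory.ae_of_all _ (fun x hx => hint x (by
      simpa [Set.uIoc_of_le (by norm_num : (0:ℝ) ≤ 0+1)] using hx)))]
  rw [integral_exp_mul_complex hc]
  push_cast
  rw [zero_add, mul_one]
  have : Complex.exp (2 * π * Complex.I * ((t:ℂ) - n)) = Complex.exp (2 * π * Complex.I * t) := by
    rw [mul_sub, Complex.exp_sub]
    rw [show (2 * (π:ℂ) * Complex.I * n) = n * (2 * π * Complex.I) by ring,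
      Complex.exp_int_mul_two_pi_mul_I, div_one]
  rw [this]
  simp

lemma sin_pi_ne (t : ℝ) (ht : ∀ m : ℤ, t ≠ m) : Real.sin (π * t) ≠ 0 := by
  intro h
  obtain ⟨m, hm⟩ := Real.sin_eq_zero_iff.mp h
  apply ht m
  have : π * t = π * m := by rw [← hm]; ring
  exact mul_left_cancel₀ Real.pi_ne_zero this

lemma hasSum_cosec (t : ℝ) (ht : ∀ m : ℤ, t ≠ m) :
    HasSum (fun n : ℤ => 1 / (t - (n : ℝ)) ^ 2) (π ^ 2 / Real.sin (π * t) ^ 2) := by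
  have hsin : Real.sin (π * t) ≠ 0 := sin_pi_ne t ht
  set F := AddCircle.liftIoc (1:ℝ) 0 (expf t) with hF
  have hnormF : ∀ x : AddCircle (1:ℝ), ‖F x‖ = 1 := by
    intro x
    have : F x = expf t ((AddCircle.equivIoc (1:ℝ) 0 x : ℝ)) := rfl
    rw [this, norm_expf]
  have hF2 : MemLp F 2 (AddCircle.haarAddCircle) :=
    MemLp.of_bound (measurable_expF t).aestronglyMeasurable 1
      (Filter.Eventually.of_forall fun x => (hnormF x).le)
  set Flp := hF2.toLp F with hFlp
  have hcoeff : ∀ m : ℤ, fourierCoeff (⇑Flp) m = fourierCoeff F m := by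
    intro m
    apply integral_congr_ae
    filter_upwards [hF2.coeFn_toLp] with x hx
    rw [hx]
  have hpar := tsum_sq_fourierCoeff Flp
  have hR : (∫ x : AddCircle (1:ℝ), ‖Flp x‖ ^ 2 ∂AddCircle.haarAddCircle) = 1 := by
    have h1 : (∫ x : AddCircle (1:ℝ), ‖Flp x‖ ^ 2 ∂AddCircle.haarAddCircle)
        = ∫ x : AddCircle (1:ℝ), (1:ℝ) ∂AddCircle.haarAddCircle := by
      apply integral_congr_ae
      filter_upwards [hF2.coeFn_toLp] with x hx
      rw [hx, hnormF x, one_pow]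
    rw [h1]
    simp
  have htsum : ∑' m : ℤ, ‖fourierCoeff F m‖ ^ 2 = 1 := by
    rw [← tsum_congr fun m => congrArg (fun z => ‖z‖ ^ 2) (hcoeff m), hpar, hR]
  have hnorm : ∀ m : ℤ, ‖fourierCoeff F m‖ ^ 2
      = Real.sin (π * t) ^ 2 / π ^ 2 * (1 / (t - (m : ℝ)) ^ 2) := by
    intro m
    rw [hF, fourierCoeff_expF t ht m, norm_div]
    have h1 : ‖Complex.exp (2 * π * Complex.I * t) - 1‖ ^ 2 = 4 * Real.sin (π * t) ^ 2 := by
      have e : (2 * (π:ℂ) * Complex.I * (t:ℂ)) = ((2 * π * t : ℝ) : ℂ) * Complex.I := by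
        push_cast; ring
      rw [e, Complex.sq_norm, Complex.normSq_apply]
      simp only [Complex.sub_re, Complex.sub_im, Complex.one_re, Complex.one_im,
        Complex.exp_ofReal_mul_I_re, Complex.exp_ofReal_mul_I_im]
      have h2 : Real.cos (2 * π * t) = 2 * Real.cos (π * t) ^ 2 - 1 := by
        rw [show 2 * π * t = 2 * (π * t) by ring, Real.cos_two_mul]
      have h3 : Real.sin (2 * π * t) = 2 * Real.sin (π * t) * Real.cos (π * t) := by
        rw [show 2 * π * t = 2 * (π * t) by ring, Real.sin_two_mul]
      rw [h2, h3]
      nlinarith [Real.sin_sq_add_cos_sq (π * t)]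
    have h2 : ‖(2 * (π:ℂ) * Complex.I * ((t:ℂ) - m))‖ ^ 2 = 4 * π ^ 2 * (t - (m:ℝ)) ^ 2 := by
      have e : (2 * (π:ℂ) * Complex.I * ((t:ℂ) - m)) = ((2 * π * (t - m) : ℝ) : ℂ) * Complex.I := by
        push_cast; ring
      rw [e, norm_mul, Complex.norm_real, Complex.norm_I, mul_one,
        Real.norm_eq_abs, sq_abs]
      ring
    rw [div_pow, h1, h2]
    have hπ : (π:ℝ) ≠ 0 := Real.pi_ne_zero
    have htm : (t - (m:ℝ)) ≠ 0 := sub_ne_zero.mpr (ht m)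
    field_simp
  have hsummable : Summable (fun m : ℤ => ‖fourierCoeff F m‖ ^ 2) := by
    rw [show (fun m : ℤ => ‖fourierCoeff F m‖ ^ 2)
      = fun m : ℤ => Real.sin (π * t) ^ 2 / π ^ 2 * (1 / (t - (m : ℝ)) ^ 2) from funext hnorm]
    apply Summable.mul_left
    refine (summable_shift (-t)).congr fun m => ?_
    rw [show ((m:ℝ) + -t) ^ 2 = (t - m) ^ 2 by ring]
  have hS : HasSum (fun m : ℤ => Real.sin (π * t) ^ 2 / π ^ 2 * (1 / (t - (m : ℝ)) ^ 2)) 1 := by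
    rw [show (fun m : ℤ => Real.sin (π * t) ^ 2 / π ^ 2 * (1 / (t - (m : ℝ)) ^ 2))
      = fun m : ℤ => ‖fourierCoeff F m‖ ^ 2 from (funext hnorm).symm]
    exact hsummable.hasSum_iff.mpr htsum
  have := hS.mul_left (π ^ 2 / Real.sin (π * t) ^ 2)
  rw [mul_one] at this
  refine this.congr_fun fun m => ?_
  have hπ : (π:ℝ) ≠ 0 := Real.pi_ne_zero
  field_simp
  rw [mul_comm t π, mul_comm _ (Real.sin _), ← div_div, div_self hsin]

lemma hasSum_all (s : ℝ) (hs : ∀ m : ℤ, s ≠ m) :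
    HasSum (fun n : ℤ => 1 / ((n : ℝ) + s) ^ 2) (π ^ 2 / Real.sin (π * s) ^ 2) := by
  have h := ((Equiv.neg ℤ).hasSum_iff).2 (hasSum_cosec s hs)
  refine h.congr_fun fun n => ?_
  simp only [Function.comp_apply, Equiv.neg_apply]
  push_cast
  rw [show s - -(n:ℝ) = (n:ℝ) + s by ring]

lemma hasSum_odd (s : ℝ) (hs : ∀ m : ℤ, s ≠ m) :
    HasSum (fun j : ℤ => 1 / (2 * (j : ℝ) + 1 + s) ^ 2)
      (π ^ 2 / (4 * Real.cos (π * s / 2) ^ 2)) := by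
  have hs2 : ∀ m : ℤ, s / 2 ≠ m := fun m h => hs (2 * m) (by push_cast; linarith)
  have hsin : Real.sin (π * s) ≠ 0 := sin_pi_ne s hs
  have hsin2 : Real.sin (π * s / 2) ≠ 0 := by
    have := sin_pi_ne (s / 2) hs2
    rwa [show π * (s / 2) = π * s / 2 by ring] at this
  have hcos2 : Real.cos (π * s / 2) ≠ 0 := by
    intro h
    apply hsin
    rw [show π * s = 2 * (π * s / 2) by ring, Real.sin_two_mul, h, mul_zero]
  have h_all := hasSum_all s hs
  have h_even : HasSum (fun j : ℤ => 1 / (2 * (j : ℝ) + s) ^ 2)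
      (π ^ 2 / (4 * Real.sin (π * s / 2) ^ 2)) := by
    have h := (hasSum_all (s / 2) hs2).mul_left (1 / 4)
    rw [show 1 / 4 * (π ^ 2 / Real.sin (π * (s / 2)) ^ 2)
      = π ^ 2 / (4 * Real.sin (π * s / 2) ^ 2) by rw [show π * (s/2) = π * s / 2 by ring]; ring]
      at h
    refine h.congr_fun fun j => ?_
    rw [show (2 * (j:ℝ) + s) ^ 2 = 4 * ((j:ℝ) + s / 2) ^ 2 by ring, mul_one_div, div_div]
  set g : ℤ → ℝ := fun n => 1 / ((n : ℝ) + s) ^ 2 with hg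
  set Ev : Set ℤ := {n : ℤ | Even n} with hEv
  let e1 : ℤ ≃ Ev := Equiv.ofBijective (fun j => ⟨2 * j, ⟨j, two_mul j⟩⟩)
    ⟨fun a b h => by
      have := congrArg Subtype.val h
      simp only at this
      omega,
     by rintro ⟨x, ⟨r, hr⟩⟩; exact ⟨r, Subtype.ext (show 2 * r = x by omega)⟩⟩
  have h_even' : HasSum ((g ∘ ((↑) : Ev → ℤ)) ∘ e1) (π ^ 2 / (4 * Real.sin (π * s / 2) ^ 2)) := by
    refine h_even.congr_fun fun j => ?_
    have hj : ((g ∘ Subtype.val) ∘ e1) j = g (2 * j) := rfl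
    rw [hj, hg]
    push_cast
    ring_nf
  have h_even_sub : HasSum (g ∘ ((↑) : Ev → ℤ)) (π ^ 2 / (4 * Real.sin (π * s / 2) ^ 2)) :=
    (e1.hasSum_iff).1 h_even'
  have h_odd_sub : HasSum (g ∘ ((↑) : ↥Evᶜ → ℤ))
      (π ^ 2 / Real.sin (π * s) ^ 2 - π ^ 2 / (4 * Real.sin (π * s / 2) ^ 2)) :=
    (h_even_sub.hasSum_iff_compl).1 h_all
  let e2 : ℤ ≃ ↥Evᶜ := Equiv.ofBijective
    (fun j => ⟨2 * j + 1, by simp [hEv, Int.even_iff]⟩)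
    ⟨fun a b h => by
      have := congrArg Subtype.val h
      simp only at this
      omega,
     by
      rintro ⟨x, hx⟩
      have hodd : ¬ Even x := hx
      rw [Int.even_iff] at hodd
      exact ⟨(x - 1) / 2, by simp only [Subtype.mk.injEq]; omega⟩⟩
  have h_odd : HasSum ((g ∘ ((↑) : ↥Evᶜ → ℤ)) ∘ e2)
      (π ^ 2 / Real.sin (π * s) ^ 2 - π ^ 2 / (4 * Real.sin (π * s / 2) ^ 2)) :=
    (e2.hasSum_iff).2 h_odd_sub
  have hval : π ^ 2 / Real.sin (π * s) ^ 2 - π ^ 2 / (4 * Real.sin (π * s / 2) ^ 2)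
      = π ^ 2 / (4 * Real.cos (π * s / 2) ^ 2) := by
    rw [show π * s = 2 * (π * s / 2) by ring, Real.sin_two_mul]
    have hpyth := Real.sin_sq_add_cos_sq (π * s / 2)
    field_simp
    linear_combination (-4) * hpyth
  rw [hval] at h_odd
  refine h_odd.congr_fun fun j => ?_
  have hj : ((g ∘ Subtype.val) ∘ e2) j = g (2 * j + 1) := rfl
  rw [hj, hg]
  push_cast
  ring_nf

lemma hasSum_oddnat : HasSum (fun k : ℕ => 1 / ((2 * (k:ℝ) + 1)) ^ 2) (π ^ 2 / 8) := by
  have hz := hasSum_zeta_two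
  have heven : HasSum (fun k : ℕ => 1 / ((2 * (k:ℝ))) ^ 2) (π ^ 2 / 24) := by
    have h := hz.mul_left (1 / 4)
    rw [show 1 / 4 * (π ^ 2 / 6) = π ^ 2 / 24 by ring] at h
    refine h.congr_fun fun k => ?_
    rw [show (2 * (k:ℝ)) ^ 2 = 4 * (k:ℝ) ^ 2 by ring, mul_one_div, div_div]
  have hsumm : Summable (fun k : ℕ => 1 / ((2 * (k:ℝ) + 1)) ^ 2) := by
    have := hz.summable.comp_injective (fun a b h => by dsimp only at h; omega : Function.Injective (fun k : ℕ => 2 * k + 1))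
    refine this.congr fun k => ?_
    simp only [Function.comp_apply]
    push_cast
    ring_nf
  have hT := hsumm.hasSum
  have hcomb : HasSum (fun k : ℕ => 1 / ((k:ℝ)) ^ 2)
      (π ^ 2 / 24 + ∑' k : ℕ, 1 / ((2 * (k:ℝ) + 1)) ^ 2) := by
    refine HasSum.even_add_odd ?_ ?_
    · exact heven.congr_fun fun k => by push_cast; ring_nf
    · exact hT.congr_fun fun k => by push_cast; ring_nf
  have := hz.unique hcomb
  have hval : ∑' k : ℕ, 1 / ((2 * (k:ℝ) + 1)) ^ 2 = π ^ 2 / 8 := by linarith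
  rwa [hval] at hT

lemma hasSum_odd_zero : HasSum (fun j : ℤ => 1 / (2 * (j : ℝ) + 1) ^ 2) (π ^ 2 / 4) := by
  have h1 := hasSum_oddnat
  have h := HasSum.of_nat_of_neg_add_one (f := fun j : ℤ => 1 / (2 * (j : ℝ) + 1) ^ 2)
    (h1.congr_fun fun k => by push_cast; ring_nf)
    (h1.congr_fun fun k => by push_cast; ring_nf)
  rwa [show π ^ 2 / 8 + π ^ 2 / 8 = π ^ 2 / 4 by ring] at h

lemma keyPair (s : ℝ) (h : (∀ m : ℤ, s ≠ m) ∨ s = 2 ∨ s = -2) :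
    HasSum (fun k : ℕ => 1 / ((2 * (k:ℝ) + 1) + s) ^ 2 + 1 / ((2 * (k:ℝ) + 1) - s) ^ 2)
      (π ^ 2 / (4 * Real.cos (π * s / 2) ^ 2)) := by
  have hOddZ : HasSum (fun j : ℤ => 1 / (2 * (j : ℝ) + 1 + s) ^ 2)
      (π ^ 2 / (4 * Real.cos (π * s / 2) ^ 2)) := by
    rcases h with h | h | h
    · exact hasSum_odd s h
    · subst h
      have hc : Real.cos (π * 2 / 2) ^ 2 = 1 := by
        rw [show π * 2 / 2 = π by ring, Real.cos_pi]; norm_num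
      rw [hc, mul_one]
      have h0 := ((Equiv.addRight (1:ℤ)).hasSum_iff).2 hasSum_odd_zero
      refine h0.congr_fun fun j => ?_
      simp only [Function.comp_apply, Equiv.coe_addRight]
      push_cast
      ring_nf
    · subst h
      have hc : Real.cos (π * (-2) / 2) ^ 2 = 1 := by
        rw [show π * (-2) / 2 = -π by ring, Real.cos_neg, Real.cos_pi]; norm_num
      rw [hc, mul_one]
      have h0 := ((Equiv.addRight (-1:ℤ)).hasSum_iff).2 hasSum_odd_zero
      refine h0.congr_fun fun j => ?_
      simp only [Function.comp_apply, Equiv.coe_addRight]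
      push_cast
      ring_nf
  have h2 := hOddZ.nat_add_neg_add_one
  refine h2.congr_fun fun k => ?_
  push_cast
  ring_nf

lemma odd_ne_two (a b : ℤ) : (2*a+1)*(2*b+1) ≠ 2 ∧ (2*a+1)*(2*b+1) ≠ -2 := by
  have h : Odd ((2*a+1)*(2*b+1)) := (odd_two_mul_add_one a).mul (odd_two_mul_add_one b)
  rw [Int.odd_iff] at h
  constructor <;> intro hcon <;> rw [hcon] at h <;> norm_num at h


end helpers

theorem stmt_16 (n : ℤ) :
    π ^ 2 = 8 * (2 * (n : ℝ) + 1) ^ 2 * Real.cos (π / (2 * (n : ℝ) + 1)) ^ 2 *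
      ∑' k : ℕ, (4 + (2 * (n : ℝ) + 1) ^ 2 * (2 * (k : ℝ) + 1) ^ 2) /
        (4 - (2 * (n : ℝ) + 1) ^ 2 * (2 * (k : ℝ) + 1) ^ 2) ^ 2 := by
  set M : ℝ := 2 * (n : ℝ) + 1 with hMdef
  have hMcast : ((2 * n + 1 : ℤ) : ℝ) = M := by push_cast; ring
  have hMz0 : (2 * n + 1 : ℤ) ≠ 0 := by omega
  have hM0 : M ≠ 0 := by
    rw [← hMcast]
    exact_mod_cast hMz0
  set s : ℝ := 2 / M with hs
  have hπ : (π : ℝ) ≠ 0 := Real.pi_ne_zero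
  have harg : π * s / 2 = π / M := by rw [hs]; field_simp
  have hcos : Real.cos (π / M) ≠ 0 := by
    intro h
    obtain ⟨k, hk⟩ := Real.cos_eq_zero_iff.mp h
    rw [div_eq_div_iff hM0 two_ne_zero] at hk
    have hp : π * 2 = π * ((2 * (k:ℝ) + 1) * M) := by linear_combination hk
    have h2 : (2:ℝ) = (2 * (k:ℝ) + 1) * M := mul_left_cancel₀ hπ hp
    have h2' : (2 * k + 1) * (2 * n + 1) = (2:ℤ) := by
      have : ((2 * k + 1 : ℤ) : ℝ) * ((2 * n + 1 : ℤ) : ℝ) = ((2:ℤ) : ℝ) := by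
        rw [hMcast]; push_cast; linarith
      exact_mod_cast this
    exact (odd_ne_two k n).1 h2'
  have hbranch : (∀ m : ℤ, s ≠ m) ∨ s = 2 ∨ s = -2 := by
    rcases eq_or_ne n 0 with rfl | hn0
    · right; left; rw [hs, hMdef]; norm_num
    rcases eq_or_ne n (-1) with rfl | hn1
    · right; right; rw [hs, hMdef]; norm_num
    left
    intro m hm
    have hM3 : (3 : ℝ) ≤ |M| := by
      rw [← hMcast, ← Int.cast_abs]
      have : (3 : ℤ) ≤ |2 * n + 1| := by
        rcases (by omega : 2 * n + 1 ≥ 3 ∨ 2 * n + 1 ≤ -3) with h | h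
        · rw [abs_of_nonneg (by omega)]; omega
        · rw [abs_of_nonpos (by omega)]; omega
      exact_mod_cast this
    have hslt : |s| < 1 := by
      rw [hs, abs_div, abs_of_nonneg (by norm_num : (0:ℝ) ≤ 2),
        div_lt_one (by linarith : (0:ℝ) < |M|)]
      linarith
    have hs0 : s ≠ 0 := div_ne_zero two_ne_zero hM0
    rw [hm] at hslt hs0
    have hm0 : m = 0 := by
      rw [← Int.cast_abs] at hslt
      exact Int.abs_lt_one_iff.mp (by exact_mod_cast hslt)
    rw [hm0] at hs0
    exact hs0 (by norm_num)
  have hP := keyPair s hbranch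
  rw [harg] at hP
  have hfinal : HasSum (fun k : ℕ => (4 + M ^ 2 * (2 * (k : ℝ) + 1) ^ 2) /
      (4 - M ^ 2 * (2 * (k : ℝ) + 1) ^ 2) ^ 2) (π ^ 2 / (8 * M ^ 2 * Real.cos (π / M) ^ 2)) := by
    have h := hP.mul_left (1 / (2 * M ^ 2))
    rw [show 1 / (2 * M ^ 2) * (π ^ 2 / (4 * Real.cos (π / M) ^ 2))
      = π ^ 2 / (8 * M ^ 2 * Real.cos (π / M) ^ 2) by field_simp; ring] at h
    refine h.congr_fun fun k => ?_
    set c : ℝ := 2 * (k : ℝ) + 1 with hc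
    have hcastA : (((2 * n + 1) * (2 * (k:ℤ) + 1) : ℤ) : ℝ) = M * c := by
      push_cast
      rw [hMdef, hc]
      try ring
    obtain ⟨hne2, hnem2⟩ := odd_ne_two n (k : ℤ)
    have hA : M * c + 2 ≠ 0 := by
      intro hcon
      apply hnem2
      have : (((2 * n + 1) * (2 * (k:ℤ) + 1) : ℤ) : ℝ) = ((-2 : ℤ) : ℝ) := by
        rw [hcastA]; push_cast; linarith
      exact_mod_cast this
    have hB : M * c - 2 ≠ 0 := by
      intro hcon
      apply hne2
      have : (((2 * n + 1) * (2 * (k:ℤ) + 1) : ℤ) : ℝ) = ((2 : ℤ) : ℝ) := by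
        rw [hcastA]; push_cast; linarith
      exact_mod_cast this
    have hD : 4 - M ^ 2 * c ^ 2 ≠ 0 := by
      rw [show 4 - M ^ 2 * c ^ 2 = -((M * c - 2) * (M * c + 2)) by ring]
      exact neg_ne_zero.mpr (mul_ne_zero hB hA)
    have key1 : M * (c + s) = M * c + 2 := by rw [hs]; field_simp; try ring
    have key2 : M * (c - s) = M * c - 2 := by rw [hs]; field_simp; try ring
    have hcs1 : c + s ≠ 0 := fun h0 => hA (by rw [← key1, h0, mul_zero])
    have hcs2 : c - s ≠ 0 := fun h0 => hB (by rw [← key2, h0, mul_zero])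
    rw [hs]
    have sh1 : c + 2 / M = (M * c + 2) / M := by
      field_simp
      try ring
    have sh2 : c - 2 / M = (M * c - 2) / M := by
      field_simp
      try ring
    rw [sh1, sh2]
    rw [div_pow, div_pow, one_div_div, one_div_div]
    rw [show 4 - M ^ 2 * c ^ 2 = -((M * c - 2) * (M * c + 2)) by ring]
    field_simp
    ring
  rw [hfinal.tsum_eq]
  field_simp
end
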